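/- arXiv:1712.03234 — 3 statements merged into one kernel-verified Lean document; each statement's English description precedes it below -/
import Mathlib

section
/- Let Λ be a locally convex row-finite k-graph. If Λ^0 is a maximal tail in Λ, then Per(Λ) is a subgroup of ℤ^k. -/
/-!
Common definitions: higher-rank graphs (`k`-graphs), boundary paths, the
equivalence relation `∼_Λ`, the periodicity group `Per(Λ)`, maximal tails,
hereditary/saturated sets, and (an axiomatization of) the Farthing
desourcification `Λ̄` of a locally convex row-finite `k`-graph `Λ`.
-/

/-- A `k`-graph: a countable small category `Λ` equipped with a degree functor
`d : Λ → ℕ^k` satisfying the factorization property.  Elements of `Path` are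
the morphisms ("paths"); the vertices are the identity morphisms (the paths `v`
with `r v = v`, equivalently of degree `0`).  The composition `comp μ ν` is
only meaningful when `s μ = r ν`. -/
structure KGraph (k : ℕ) where
  Path : Type
  countable_path : Countable Path
  nonempty_path : Nonempty Path
  r : Path → Path
  s : Path → Path
  d : Path → Fin k → ℕ
  comp : Path → Path → Path
  d_r : ∀ μ, d (r μ) = 0
  d_s : ∀ μ, d (s μ) = 0
  r_r : ∀ μ, r (r μ) = r μ
  s_r : ∀ μ, s (r μ) = r μ
  r_s : ∀ μ, r (s μ) = s μ
  s_s : ∀ μ, s (s μ) = s μ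
  comp_id : ∀ μ, comp μ (s μ) = μ
  id_comp : ∀ μ, comp (r μ) μ = μ
  r_comp : ∀ μ ν, s μ = r ν → r (comp μ ν) = r μ
  s_comp : ∀ μ ν, s μ = r ν → s (comp μ ν) = s ν
  d_comp : ∀ μ ν, s μ = r ν → d (comp μ ν) = d μ + d ν
  comp_assoc : ∀ μ ν ρ, s μ = r ν → s ν = r ρ →
    comp (comp μ ν) ρ = comp μ (comp ν ρ)
  factorization : ∀ (lam : Path) (m n : Fin k → ℕ), d lam = m + n →
    ∃! p : Path × Path, d p.1 = m ∧ d p.2 = n ∧ s p.1 = r p.2 ∧ lam = comp p.1 p.2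

namespace KGraph

variable {k : ℕ}

/-- The vertices of a `k`-graph are its identity morphisms. -/
def IsVertex (Λ : KGraph k) (v : Λ.Path) : Prop := Λ.r v = v

/-- `Λ.boundedPaths n` is the set `Λ^{≤ n}`: paths `λ` with `d λ ≤ n` such that
`d(λ)_i < n_i` implies `s(λ)Λ^{e_i} = ∅`. -/
def boundedPaths (Λ : KGraph k) (n : Fin k → ℕ) : Set Λ.Path :=
  {lam | Λ.d lam ≤ n ∧ ∀ i : Fin k, Λ.d lam i < n i →
    ∀ e, Λ.r e = Λ.s lam → Λ.d e ≠ Pi.single i 1}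

/-- `Λ` is row-finite if every `vΛ^n` is finite. -/
def RowFinite (Λ : KGraph k) : Prop :=
  ∀ (v : Λ.Path) (n : Fin k → ℕ), Λ.IsVertex v →
    {lam | Λ.r lam = v ∧ Λ.d lam = n}.Finite

/-- `Λ` is locally convex if for `i ≠ j`, `λ ∈ vΛ^{e_i}` and `μ ∈ vΛ^{e_j}`
one has `s(λ)Λ^{e_j} ≠ ∅` (by symmetry in `i, j` this also gives
`s(μ)Λ^{e_i} ≠ ∅`). -/
def LocallyConvex (Λ : KGraph k) : Prop :=
  ∀ i j : Fin k, i ≠ j → ∀ lam mu : Λ.Path, Λ.r lam = Λ.r mu →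
    Λ.d lam = Pi.single i 1 → Λ.d mu = Pi.single j 1 →
    ∃ lam', Λ.r lam' = Λ.s lam ∧ Λ.d lam' = Pi.single j 1

end KGraph

/-- A boundary path of `Λ`: a degree-preserving functor `x : Ω_{k,m} → Λ`
(`m = deg ∈ (ℕ ∪ {∞})^k`) such that `p ≤ m` and `p_i = m_i` imply
`x(p)Λ^{e_i} = ∅`.  `seg p q` is the path `x(p,q)`, meaningful for
`p ≤ q ≤ deg`; `seg p p` is the vertex `x(p)`. -/
structure BoundaryPath {k : ℕ} (Λ : KGraph k) where
  deg : Fin k → ℕ∞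
  seg : (Fin k → ℕ) → (Fin k → ℕ) → Λ.Path
  seg_d : ∀ p q : Fin k → ℕ, p ≤ q → (∀ i, (q i : ℕ∞) ≤ deg i) →
    Λ.d (seg p q) = q - p
  seg_r : ∀ p q : Fin k → ℕ, p ≤ q → (∀ i, (q i : ℕ∞) ≤ deg i) →
    Λ.r (seg p q) = seg p p
  seg_s : ∀ p q : Fin k → ℕ, p ≤ q → (∀ i, (q i : ℕ∞) ≤ deg i) →
    Λ.s (seg p q) = seg q q
  seg_comp : ∀ p q t : Fin k → ℕ, p ≤ q → q ≤ t → (∀ i, (t i : ℕ∞) ≤ deg i) →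
    Λ.comp (seg p q) (seg q t) = seg p t
  boundary : ∀ p : Fin k → ℕ, (∀ i, (p i : ℕ∞) ≤ deg i) →
    ∀ i : Fin k, (p i : ℕ∞) = deg i →
      ∀ e, Λ.r e = seg p p → Λ.d e ≠ Pi.single i 1

/-- `emin m e` is the coordinatewise minimum `m ∧ e` of `m ∈ ℕ^k` with the
(possibly infinite) degree `e ∈ (ℕ ∪ {∞})^k`, as an element of `ℕ^k`. -/
noncomputable def emin {k : ℕ} (m : Fin k → ℕ) (e : Fin k → ℕ∞) : Fin k → ℕ :=
  fun i => (min ((m i : ℕ∞)) (e i)).toNat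

/-- Equality of boundary paths (of the same degree), as functors. -/
def BPEq {k : ℕ} {Λ : KGraph k} (x y : BoundaryPath Λ) : Prop :=
  x.deg = y.deg ∧ ∀ p q : Fin k → ℕ, p ≤ q → (∀ i, (q i : ℕ∞) ≤ x.deg i) →
    x.seg p q = y.seg p q

/-- `IsExtension Λ lam x y` says that `y = lam · x` is the (unique) boundary
path with `y(0, d lam) = lam` and `y(d lam, d lam + p) = x(0, p)`. -/
def IsExtension {k : ℕ} (Λ : KGraph k) (lam : Λ.Path) (x y : BoundaryPath Λ) :
    Prop :=
  (∀ i, y.deg i = (Λ.d lam i : ℕ∞) + x.deg i) ∧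
  y.seg 0 (Λ.d lam) = lam ∧
  ∀ p : Fin k → ℕ, (∀ i, (p i : ℕ∞) ≤ x.deg i) →
    y.seg (Λ.d lam) (Λ.d lam + p) = x.seg 0 p

/-- The relation `μ ∼_Λ ν`: `s μ = s ν` and `μx = νx` for every boundary path
`x ∈ s(μ)Λ^{≤∞}`. -/
def KGraph.peq {k : ℕ} (Λ : KGraph k) (μ ν : Λ.Path) : Prop :=
  Λ.s μ = Λ.s ν ∧ ∀ x y z : BoundaryPath Λ, x.seg 0 0 = Λ.s μ →
    IsExtension Λ μ x y → IsExtension Λ ν x z → BPEq y z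

/-- `Per(Λ) = {d μ - d ν : μ ∼_Λ ν} ⊆ ℤ^k`. -/
def KGraph.Per {k : ℕ} (Λ : KGraph k) : Set (Fin k → ℤ) :=
  {g | ∃ μ ν : Λ.Path, Λ.peq μ ν ∧ g = fun i => (Λ.d μ i : ℤ) - (Λ.d ν i : ℤ)}

/-- `Λ` is aperiodic if for every vertex `v` there is a boundary path
`x ∈ vΛ^{≤∞}` such that distinct `μ, ν ∈ Λv` have `μx ≠ νx`. -/
def KGraph.Aperiodic {k : ℕ} (Λ : KGraph k) : Prop :=
  ∀ v : Λ.Path, Λ.IsVertex v → ∃ x : BoundaryPath Λ, x.seg 0 0 = v ∧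
    ∀ μ ν : Λ.Path, Λ.s μ = v → Λ.s ν = v → μ ≠ ν →
      ∀ y z : BoundaryPath Λ, IsExtension Λ μ x y → IsExtension Λ ν x z →
        ¬ BPEq y z

/-- A maximal tail: a nonempty set `T` of vertices such that (1) `s λ ∈ T`
implies `r λ ∈ T`; (2) for `v ∈ T` and `n ∈ ℕ^k` there is `λ ∈ vΛ^{≤n}` with
`s λ ∈ T`; (3) any `v, w ∈ T` are connected via `μ ∈ vΛ`, `ν ∈ wΛ` with
`s μ = s ν`. -/
def KGraph.IsMaximalTail {k : ℕ} (Λ : KGraph k) (T : Set Λ.Path) : Prop :=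
  T.Nonempty ∧ (∀ v ∈ T, Λ.IsVertex v) ∧
  (∀ lam : Λ.Path, Λ.s lam ∈ T → Λ.r lam ∈ T) ∧
  (∀ v ∈ T, ∀ n : Fin k → ℕ,
    ∃ lam ∈ Λ.boundedPaths n, Λ.r lam = v ∧ Λ.s lam ∈ T) ∧
  (∀ v ∈ T, ∀ w ∈ T, ∃ μ ν : Λ.Path, Λ.r μ = v ∧ Λ.r ν = w ∧ Λ.s μ = Λ.s ν)

/-- `H_{Per(Λ)}`: the set of vertices `v` such that for all `μ ∈ vΛ` and
`m ∈ ℕ^k` with `d μ - m ∈ Per(Λ)` there exists `ν ∈ vΛ^m` with `μ ∼_Λ ν`. -/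
def KGraph.HPer {k : ℕ} (Λ : KGraph k) : Set Λ.Path :=
  {v | Λ.IsVertex v ∧ ∀ μ : Λ.Path, Λ.r μ = v → ∀ m : Fin k → ℕ,
    (fun i => (Λ.d μ i : ℤ) - (m i : ℤ)) ∈ Λ.Per →
    ∃ ν : Λ.Path, Λ.r ν = v ∧ Λ.d ν = m ∧ Λ.peq μ ν}

/-- A set of vertices `H` is hereditary if `r λ ∈ H` implies `s λ ∈ H`. -/
def KGraph.Hereditary {k : ℕ} (Λ : KGraph k) (H : Set Λ.Path) : Prop :=
  ∀ lam : Λ.Path, Λ.r lam ∈ H → Λ.s lam ∈ H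

/-- A set of vertices `H` is saturated if `s(vΛ^{≤n}) ⊆ H` for some `n ∈ ℕ^k`
implies `v ∈ H`. -/
def KGraph.Saturated {k : ℕ} (Λ : KGraph k) (H : Set Λ.Path) : Prop :=
  ∀ v : Λ.Path, Λ.IsVertex v →
    (∃ n : Fin k → ℕ, ∀ lam ∈ Λ.boundedPaths n, Λ.r lam = v → Λ.s lam ∈ H) →
    v ∈ H

/-- `Σ(H)`: the smallest saturated set containing `H`. -/
def KGraph.SatClosure {k : ℕ} (Λ : KGraph k) (H : Set Λ.Path) : Set Λ.Path :=
  ⋂₀ {S : Set Λ.Path | H ⊆ S ∧ Λ.Saturated S}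

/-- A boundary path `x` is cofinal if every vertex `v` admits `n ≤ d x` with
`vΛx(n) ≠ ∅`. -/
def KGraph.CofinalBP {k : ℕ} (Λ : KGraph k) (x : BoundaryPath Λ) : Prop :=
  ∀ v : Λ.Path, Λ.IsVertex v → ∃ n : Fin k → ℕ,
    (∀ i, (n i : ℕ∞) ≤ x.deg i) ∧ ∃ μ : Λ.Path, Λ.r μ = v ∧ Λ.s μ = x.seg n n

/-- `Λ` is cofinal if all of its boundary paths are cofinal. -/
def KGraph.Cofinal {k : ℕ} (Λ : KGraph k) : Prop :=
  ∀ x : BoundaryPath Λ, Λ.CofinalBP x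

/-- `T(v) = {s μ : μ ∈ vΛ}`, the smallest hereditary set containing `v`. -/
def KGraph.tree {k : ℕ} (Λ : KGraph k) (v : Λ.Path) : Set Λ.Path :=
  {w | ∃ μ : Λ.Path, Λ.r μ = v ∧ Λ.s μ = w}

/-- `Δ(H₁,H₂) = {v ∈ H₁ : T(v) ∩ H₂ = ∅}`. -/
def KGraph.Delta {k : ℕ} (Λ : KGraph k) (H₁ H₂ : Set Λ.Path) : Set Λ.Path :=
  {v ∈ H₁ | Λ.tree v ∩ H₂ = ∅}

/-- `Ω(H₁,H₂) = {v ∈ H₁ \ H₂ : T(v) ∩ H₂ ≠ ∅}`. -/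
def KGraph.Omega {k : ℕ} (Λ : KGraph k) (H₁ H₂ : Set Λ.Path) : Set Λ.Path :=
  {v ∈ H₁ \ H₂ | (Λ.tree v ∩ H₂).Nonempty}

/-- The relation `H₁ ≻ H₂`. -/
def KGraph.Succ {k : ℕ} (Λ : KGraph k) (H₁ H₂ : Set Λ.Path) : Prop :=
  H₂ ⊆ H₁ ∧ (Λ.Delta H₁ H₂).Nonempty ∧
  ∀ v ∈ Λ.Omega H₁ H₂, ∃ n : Fin k → ℕ,
    ∀ lam ∈ Λ.boundedPaths n, Λ.r lam = v → Λ.s lam ∈ H₂ ∪ Λ.Delta H₁ H₂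

/-- `IsGlue Λ x n y p z` says that `z` is the boundary path
`x(0, n ∧ d x) · σ^{p ∧ d y}(y)`. -/
def IsGlue {k : ℕ} (Λ : KGraph k) (x : BoundaryPath Λ) (n : Fin k → ℕ)
    (y : BoundaryPath Λ) (p : Fin k → ℕ) (z : BoundaryPath Λ) : Prop :=
  (∀ i, z.deg i = (emin n x.deg i : ℕ∞) + (y.deg i - (emin p y.deg i : ℕ∞))) ∧
  z.seg 0 (emin n x.deg) = x.seg 0 (emin n x.deg) ∧
  ∀ t : Fin k → ℕ, (∀ i, ((emin p y.deg i + t i : ℕ) : ℕ∞) ≤ y.deg i) →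
    z.seg (emin n x.deg) (emin n x.deg + t) =
      y.seg (emin p y.deg) (emin p y.deg + t)

/-- The Farthing desourcification `Λ̄ = P_Λ/≈` of `Λ`: a `k`-graph `bar`
without sources whose morphisms are the classes `cls x m n = [x;(m,n)]`
(`x ∈ Λ^{≤∞}`, `m ≤ n ∈ ℕ^k`), where `[x;(m,n)] = [y;(p,q)]` iff
(P1) `x(m ∧ d x, n ∧ d x) = y(p ∧ d y, q ∧ d y)`,
(P2) `m - m ∧ d x = p - p ∧ d y` and (P3) `n - m = q - p`; together with the
range, source, degree and composition formulas, the canonical embedding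
`emb : Λ → Λ̄` (`λ ↦ [λx;(0, d λ)]`) and the projection `proj = π : Λ̄ → Λ`,
`π [x;(m,n)] = [x;(m ∧ d x, n ∧ d x)]`. -/
structure Desourcification {k : ℕ} (Λ : KGraph k) where
  bar : KGraph k
  noSources : ∀ v : bar.Path, bar.IsVertex v → ∀ i : Fin k,
    ∃ e, bar.r e = v ∧ bar.d e = Pi.single i 1
  cls : BoundaryPath Λ → (Fin k → ℕ) → (Fin k → ℕ) → bar.Path
  cls_surjective : ∀ μ : bar.Path,
    ∃ (x : BoundaryPath Λ) (m : Fin k → ℕ), μ = cls x m (m + bar.d μ)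
  cls_eq_iff : ∀ (x : BoundaryPath Λ) (m n : Fin k → ℕ) (y : BoundaryPath Λ)
    (p q : Fin k → ℕ), m ≤ n → p ≤ q →
    (cls x m n = cls y p q ↔
      (x.seg (emin m x.deg) (emin n x.deg) =
          y.seg (emin p y.deg) (emin q y.deg) ∧
        m - emin m x.deg = p - emin p y.deg ∧
        n - m = q - p))
  d_cls : ∀ (x : BoundaryPath Λ) (m n : Fin k → ℕ), m ≤ n →
    bar.d (cls x m n) = n - m
  r_cls : ∀ (x : BoundaryPath Λ) (m n : Fin k → ℕ), m ≤ n →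
    bar.r (cls x m n) = cls x m m
  s_cls : ∀ (x : BoundaryPath Λ) (m n : Fin k → ℕ), m ≤ n →
    bar.s (cls x m n) = cls x n n
  comp_cls : ∀ (x y : BoundaryPath Λ) (m n p q : Fin k → ℕ), m ≤ n → p ≤ q →
    bar.s (cls x m n) = bar.r (cls y p q) →
    ∀ z : BoundaryPath Λ, IsGlue Λ x n y p z →
      bar.comp (cls x m n) (cls y p q) = cls z m (n + (q - p))
  emb : Λ.Path → bar.Path
  emb_injective : Function.Injective emb
  emb_r : ∀ lam : Λ.Path, emb (Λ.r lam) = bar.r (emb lam)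
  emb_s : ∀ lam : Λ.Path, emb (Λ.s lam) = bar.s (emb lam)
  emb_d : ∀ lam : Λ.Path, bar.d (emb lam) = Λ.d lam
  emb_comp : ∀ μ ν : Λ.Path, Λ.s μ = Λ.r ν →
    emb (Λ.comp μ ν) = bar.comp (emb μ) (emb ν)
  emb_cls : ∀ (lam : Λ.Path) (x y : BoundaryPath Λ), x.seg 0 0 = Λ.s lam →
    IsExtension Λ lam x y → emb lam = cls y 0 (Λ.d lam)
  proj : bar.Path → Λ.Path
  proj_cls : ∀ (x : BoundaryPath Λ) (m n : Fin k → ℕ), m ≤ n →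
    proj (cls x m n) = x.seg (emin m x.deg) (emin n x.deg)

/-- `IsInfClass D x p z` says that `z` is the infinite path `[x;(p,∞)]` of
`Λ̄`, i.e. `z(m,n) = [x;(p+m, p+n)]`. -/
def IsInfClass {k : ℕ} {Λ : KGraph k} (D : Desourcification Λ)
    (x : BoundaryPath Λ) (p : Fin k → ℕ) (z : BoundaryPath D.bar) : Prop :=
  (∀ i, z.deg i = (⊤ : ℕ∞)) ∧
  ∀ m n : Fin k → ℕ, m ≤ n → z.seg m n = D.cls x (p + m) (p + n)

/-- `IsShift x n y` says that `y = σ^n(x)` is the `n`-shifted boundary path,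
`σ^n(x)(p,q) = x(p+n, q+n)`, of degree `d x - n`. -/
def IsShift {k : ℕ} {Λ : KGraph k} (x : BoundaryPath Λ) (n : Fin k → ℕ)
    (y : BoundaryPath Λ) : Prop :=
  (∀ i, y.deg i = x.deg i - (n i : ℕ∞)) ∧
  ∀ p q : Fin k → ℕ, p ≤ q → (∀ i, (q i : ℕ∞) ≤ y.deg i) →
    y.seg p q = x.seg (p + n) (q + n)


/-! ### Auxiliary development -/

namespace KGraph

variable {k : ℕ}

/-- A vertex has an edge of degree `e_i`. -/
def HasEdge (Λ : KGraph k) (v : Λ.Path) (i : Fin k) : Prop :=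
  ∃ e, Λ.r e = v ∧ Λ.d e = Pi.single i 1

lemma vertex_of_d_eq_zero {Λ : KGraph k} {lam : Λ.Path} (h : Λ.d lam = 0) :
    Λ.r lam = lam ∧ Λ.s lam = lam := by
  obtain ⟨p, _, hu⟩ := Λ.factorization lam 0 0 (by simp [h])
  have h1 : (Λ.r lam, lam) = p :=
    hu _ ⟨Λ.d_r lam, h, by rw [Λ.s_r], (Λ.id_comp lam).symm⟩
  have h2 : (lam, Λ.s lam) = p :=
    hu _ ⟨h, Λ.d_s lam, (Λ.r_s lam).symm, (Λ.comp_id lam).symm⟩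
  have := h1.trans h2.symm
  exact ⟨congrArg Prod.fst this, (congrArg Prod.snd this).symm⟩

lemma fac_unique {Λ : KGraph k} {lam u ρ u' ρ' : Λ.Path}
    (h : lam = Λ.comp u ρ) (h' : lam = Λ.comp u' ρ')
    (hd : Λ.d u = Λ.d u') (hs : Λ.s u = Λ.r ρ) (hs' : Λ.s u' = Λ.r ρ') :
    u = u' ∧ ρ = ρ' := by
  have hdl : Λ.d lam = Λ.d u + Λ.d ρ := by rw [h, Λ.d_comp _ _ hs]
  have hdl' : Λ.d lam = Λ.d u' + Λ.d ρ' := by rw [h', Λ.d_comp _ _ hs']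
  have hdρ : Λ.d ρ = Λ.d ρ' := by
    funext i
    have e1 := congrFun hdl i; have e2 := congrFun hdl' i; have e3 := congrFun hd i
    simp only [Pi.add_apply] at e1 e2
    omega
  obtain ⟨p, _, hu⟩ := Λ.factorization lam (Λ.d u) (Λ.d ρ) hdl
  have h1 : (u, ρ) = p := hu _ ⟨rfl, rfl, hs, h⟩
  have h2 : (u', ρ') = p := hu _ ⟨hd.symm, hdρ.symm, hs', h'⟩
  have := h1.trans h2.symm
  exact ⟨congrArg Prod.fst this, congrArg Prod.snd this⟩

lemma d_split {Λ : KGraph k} {lam : Λ.Path} {n : Fin k → ℕ} (h : n ≤ Λ.d lam) :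
    Λ.d lam = n + (Λ.d lam - n) := by
  funext i
  have hi : n i ≤ Λ.d lam i := h i
  simp only [Pi.add_apply, Pi.sub_apply]
  omega

/-- The pair of factors of `lam` at degree `n`. -/
noncomputable def fpair (Λ : KGraph k) (lam : Λ.Path) (n : Fin k → ℕ) : Λ.Path × Λ.Path :=
  @dite _ (n ≤ Λ.d lam) (Classical.dec _)
    (fun h => (Λ.factorization lam n (Λ.d lam - n) (d_split h)).choose)
    (fun _ => (lam, Λ.s lam))

/-- Initial factor of `lam` of degree `n`. -/
noncomputable def ipart (Λ : KGraph k) (lam : Λ.Path) (n : Fin k → ℕ) : Λ.Path :=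
  (Λ.fpair lam n).1

/-- Tail factor of `lam` starting at degree `n`. -/
noncomputable def tpart (Λ : KGraph k) (lam : Λ.Path) (n : Fin k → ℕ) : Λ.Path :=
  (Λ.fpair lam n).2

lemma fpair_spec {Λ : KGraph k} (lam : Λ.Path) {n : Fin k → ℕ} (h : n ≤ Λ.d lam) :
    Λ.d (Λ.ipart lam n) = n ∧ Λ.d (Λ.tpart lam n) = Λ.d lam - n ∧
      Λ.s (Λ.ipart lam n) = Λ.r (Λ.tpart lam n) ∧
      lam = Λ.comp (Λ.ipart lam n) (Λ.tpart lam n) := by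
  unfold ipart tpart fpair
  rw [dif_pos h]
  exact (Λ.factorization lam n (Λ.d lam - n) (d_split h)).choose_spec.1

lemma fpair_unique {Λ : KGraph k} {lam u ρ : Λ.Path} {n : Fin k → ℕ}
    (hd : Λ.d u = n) (hs : Λ.s u = Λ.r ρ) (hc : lam = Λ.comp u ρ) :
    Λ.ipart lam n = u ∧ Λ.tpart lam n = ρ := by
  have hn : n ≤ Λ.d lam := by
    intro i
    have := congrFun (by rw [hc, Λ.d_comp _ _ hs] : Λ.d lam = Λ.d u + Λ.d ρ) i
    have := congrFun hd i
    simp only [Pi.add_apply] at *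
    omega
  obtain ⟨hd1, _, hs1, hc1⟩ := fpair_spec lam hn
  have := fac_unique hc1 hc (hd1.trans hd.symm) hs1 hs
  exact this

lemma ipart_full {Λ : KGraph k} (lam : Λ.Path) : Λ.ipart lam (Λ.d lam) = lam :=
  (fpair_unique rfl (Λ.r_s lam).symm (Λ.comp_id lam).symm).1

lemma tpart_full {Λ : KGraph k} (lam : Λ.Path) : Λ.tpart lam (Λ.d lam) = Λ.s lam :=
  (fpair_unique rfl (Λ.r_s lam).symm (Λ.comp_id lam).symm).2

lemma ipart_zero {Λ : KGraph k} (lam : Λ.Path) : Λ.ipart lam 0 = Λ.r lam :=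
  (fpair_unique (Λ.d_r lam) (Λ.s_r lam) (Λ.id_comp lam).symm).1

lemma tpart_zero {Λ : KGraph k} (lam : Λ.Path) : Λ.tpart lam 0 = lam :=
  (fpair_unique (Λ.d_r lam) (Λ.s_r lam) (Λ.id_comp lam).symm).2

lemma r_ipart {Λ : KGraph k} {lam : Λ.Path} {n : Fin k → ℕ} (h : n ≤ Λ.d lam) :
    Λ.r (Λ.ipart lam n) = Λ.r lam := by
  obtain ⟨_, _, hs, hc⟩ := fpair_spec lam h
  conv_rhs => rw [hc]
  rw [Λ.r_comp _ _ hs]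

lemma s_tpart {Λ : KGraph k} {lam : Λ.Path} {n : Fin k → ℕ} (h : n ≤ Λ.d lam) :
    Λ.s (Λ.tpart lam n) = Λ.s lam := by
  obtain ⟨_, _, hs, hc⟩ := fpair_spec lam h
  conv_rhs => rw [hc]
  rw [Λ.s_comp _ _ hs]

lemma ipart_comp {Λ : KGraph k} {lam ρ : Λ.Path} (hs : Λ.s lam = Λ.r ρ) :
    Λ.ipart (Λ.comp lam ρ) (Λ.d lam) = lam ∧ Λ.tpart (Λ.comp lam ρ) (Λ.d lam) = ρ :=
  fpair_unique rfl hs rfl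

lemma ipart_ipart {Λ : KGraph k} {lam : Λ.Path} {p N : Fin k → ℕ}
    (hp : p ≤ N) (hN : N ≤ Λ.d lam) :
    Λ.ipart (Λ.ipart lam N) p = Λ.ipart lam p := by
  obtain ⟨hdA, _, hsA, hcA⟩ := fpair_spec lam hN
  have hp' : p ≤ Λ.d (Λ.ipart lam N) := by rw [hdA]; exact hp
  obtain ⟨hdu, _, hsu, hcu⟩ := fpair_spec (Λ.ipart lam N) hp'
  have hsρB : Λ.s (Λ.tpart (Λ.ipart lam N) p) = Λ.r (Λ.tpart lam N) := by
    rw [s_tpart hp']; exact hsA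
  have hc2 : lam = Λ.comp (Λ.ipart (Λ.ipart lam N) p)
      (Λ.comp (Λ.tpart (Λ.ipart lam N) p) (Λ.tpart lam N)) := by
    rw [← Λ.comp_assoc _ _ _ hsu hsρB, ← hcu]
    exact hcA
  have hs2 : Λ.s (Λ.ipart (Λ.ipart lam N) p) =
      Λ.r (Λ.comp (Λ.tpart (Λ.ipart lam N) p) (Λ.tpart lam N)) := by
    rw [Λ.r_comp _ _ hsρB]; exact hsu
  exact ((fpair_unique hdu hs2 hc2).1).symm

lemma ipart_comp_left {Λ : KGraph k} {lam ρ : Λ.Path} {n : Fin k → ℕ}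
    (hn : n ≤ Λ.d lam) (hs : Λ.s lam = Λ.r ρ) :
    Λ.ipart (Λ.comp lam ρ) n = Λ.ipart lam n := by
  have h1 := (ipart_comp hs).1
  have hN : Λ.d lam ≤ Λ.d (Λ.comp lam ρ) := by
    rw [Λ.d_comp _ _ hs]; intro i; simp only [Pi.add_apply]; omega
  calc Λ.ipart (Λ.comp lam ρ) n = Λ.ipart (Λ.ipart (Λ.comp lam ρ) (Λ.d lam)) n :=
        by rw [h1, ← ipart_ipart hn hN, h1]
    _ = Λ.ipart lam n := by rw [h1]

lemma hasEdge_r {Λ : KGraph k} {lam : Λ.Path} {i : Fin k}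
    (h : Λ.HasEdge (Λ.s lam) i) : Λ.HasEdge (Λ.r lam) i := by
  obtain ⟨e, he, hd⟩ := h
  have hs : Λ.s lam = Λ.r e := he.symm
  have hle : Pi.single i 1 ≤ Λ.d (Λ.comp lam e) := by
    rw [Λ.d_comp _ _ hs, hd]
    intro j; simp only [Pi.add_apply]; omega
  refine ⟨Λ.ipart (Λ.comp lam e) (Pi.single i 1), ?_, (fpair_spec _ hle).1⟩
  rw [r_ipart hle, Λ.r_comp _ _ hs]

lemma hasEdge_s {Λ : KGraph k} (hlc : Λ.LocallyConvex) {lam : Λ.Path} {i : Fin k}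
    (hz : Λ.d lam i = 0) (h : Λ.HasEdge (Λ.r lam) i) : Λ.HasEdge (Λ.s lam) i := by
  generalize hN : (∑ j, Λ.d lam j) = N
  induction N using Nat.strong_induction_on generalizing lam with
  | _ N ih =>
    by_cases h0 : Λ.d lam = 0
    · obtain ⟨hr, hsv⟩ := vertex_of_d_eq_zero h0
      rwa [hsv, ← hr]
    · have hj : ∃ j, 0 < Λ.d lam j := by
        by_contra hc; push_neg at hc
        exact h0 (funext fun j => by have := hc j; simp only [Pi.zero_apply]; omega)
      obtain ⟨j, hj⟩ := hj
      have hij : i ≠ j := fun hij => by rw [hij] at hz; omega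
      have hle : Pi.single j 1 ≤ Λ.d lam := by
        intro l
        by_cases hl : l = j <;> simp [hl, Pi.single_apply] <;> omega
      obtain ⟨hdf, hdρ, hsf, hcf⟩ := fpair_spec lam hle
      obtain ⟨e, hre, hde⟩ := h
      have hre' : Λ.r e = Λ.r (Λ.ipart lam (Pi.single j 1)) := by
        rw [r_ipart hle, hre]
      obtain ⟨e', hre'', hde'⟩ := hlc j i (Ne.symm hij) (Λ.ipart lam (Pi.single j 1)) e
        hre'.symm hdf hde
      have htz : Λ.d (Λ.tpart lam (Pi.single j 1)) i = 0 := by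
        rw [hdρ]; simp only [Pi.sub_apply]
        rw [Pi.single_apply, if_neg hij]
        omega
      have hsum : (∑ l, Λ.d (Λ.tpart lam (Pi.single j 1)) l) < N := by
        rw [← hN, hdρ]
        have hthis : ∀ l, (Λ.d lam - Pi.single j 1 : Fin k → ℕ) l ≤ Λ.d lam l := by
          intro l; simp only [Pi.sub_apply]; omega
        have hlt : (Λ.d lam - Pi.single j 1 : Fin k → ℕ) j < Λ.d lam j := by
          simp only [Pi.sub_apply, Pi.single_eq_same]; omega
        exact Finset.sum_lt_sum (fun l _ => hthis l) ⟨j, Finset.mem_univ j, hlt⟩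
      have := ih _ hsum htz ⟨e', by rw [hre'', hsf], hde'⟩ rfl
      rwa [s_tpart hle] at this

lemma boundedPaths_comp {Λ : KGraph k} {m n : Fin k → ℕ} {lam mu : Λ.Path}
    (hl : lam ∈ Λ.boundedPaths m) (hm : mu ∈ Λ.boundedPaths n) (hs : Λ.s lam = Λ.r mu) :
    Λ.comp lam mu ∈ Λ.boundedPaths (m + n) := by
  obtain ⟨hld, hlc⟩ := hl
  obtain ⟨hmd, hmc⟩ := hm
  constructor
  · rw [Λ.d_comp _ _ hs]
    intro i; simp only [Pi.add_apply]
    exact Nat.add_le_add (hld i) (hmd i)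
  · intro i hlt e hre hde
    rw [Λ.d_comp _ _ hs] at hlt
    simp only [Pi.add_apply] at hlt
    rw [Λ.s_comp _ _ hs] at hre
    by_cases hcase : Λ.d mu i < n i
    · exact hmc i hcase e hre hde
    · have : Λ.d lam i < m i := by omega
      have hedge : Λ.HasEdge (Λ.r mu) i := hasEdge_r ⟨e, hre, hde⟩
      rw [← hs] at hedge
      obtain ⟨e', hre', hde'⟩ := hedge
      exact hlc i this e' hre' hde'

end KGraph

lemma enat_sub_le {q a : ℕ} {e : ℕ∞} (h : (q:ℕ∞) ≤ (a:ℕ∞) + e) :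
    ((max q a - a : ℕ) : ℕ∞) ≤ e := by
  cases e with
  | top => exact le_top
  | coe m =>
    have h1 : (q:ℕ∞) ≤ ((a + m : ℕ) : ℕ∞) := by push_cast; exact h
    exact Nat.cast_le.mpr (by have := Nat.cast_le.mp h1; omega)

lemma exists_le_of_le_iSup {n : ℕ} {f : ℕ → ℕ} (h : (n:ℕ∞) ≤ ⨆ j, (f j : ℕ∞)) :
    ∃ j, n ≤ f j := by
  by_contra hn
  push_neg at hn
  rcases n with _|n
  · exact absurd (hn 0) (by omega)
  · have h2 : ⨆ j, (f j : ℕ∞) ≤ (n : ℕ∞) := iSup_le fun j => Nat.cast_le.mpr (by have := hn j; omega)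
    have := Nat.cast_le.mp (le_trans h h2)
    omega

namespace BoundaryPath

variable {k : ℕ} {Λ : KGraph k}

/-- `x.ble n`: the vector `n` is bounded by the degree of `x`. -/
def ble (x : BoundaryPath Λ) (n : Fin k → ℕ) : Prop := ∀ i, (n i : ℕ∞) ≤ x.deg i

lemma ble_mono {x : BoundaryPath Λ} {p q : Fin k → ℕ} (h : p ≤ q) (hq : x.ble q) : x.ble p :=
  fun i => le_trans (Nat.cast_le.mpr (h i)) (hq i)

lemma ble_zero (x : BoundaryPath Λ) : x.ble 0 := fun i => by simp

lemma ble_congr {x y : BoundaryPath Λ} (h : x.deg = y.deg) {n : Fin k → ℕ}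
    (hn : x.ble n) : y.ble n := fun i => by rw [← h]; exact hn i

lemma seg_fac (x : BoundaryPath Λ) {p q : Fin k → ℕ} (hpq : p ≤ q) (hq : x.ble q) :
    x.seg 0 q = Λ.comp (x.seg 0 p) (x.seg p q) :=
  (x.seg_comp 0 p q (fun _ => Nat.zero_le _) hpq hq).symm

lemma d_seg0 (x : BoundaryPath Λ) {q : Fin k → ℕ} (hq : x.ble q) : Λ.d (x.seg 0 q) = q := by
  rw [x.seg_d 0 q (fun _ => Nat.zero_le _) hq]
  funext i; simp

lemma sr_seg {x : BoundaryPath Λ} {p q : Fin k → ℕ} (hpq : p ≤ q) (hq : x.ble q) :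
    Λ.s (x.seg 0 p) = Λ.r (x.seg p q) := by
  rw [x.seg_s 0 p (fun _ => Nat.zero_le _) (ble_mono hpq hq), x.seg_r p q hpq hq]

lemma initial_cut {x y : BoundaryPath Λ} {q Q : Fin k → ℕ} (hqQ : q ≤ Q)
    (hQx : x.ble Q) (hQy : y.ble Q) (h : x.seg 0 Q = y.seg 0 Q) :
    x.seg 0 q = y.seg 0 q := by
  have h1 := seg_fac x hqQ hQx
  have h2 := seg_fac y hqQ hQy
  rw [h] at h1
  exact ((KGraph.fac_unique h2 h1
    ((d_seg0 y (ble_mono hqQ hQy)).trans (d_seg0 x (ble_mono hqQ hQx)).symm)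
    (sr_seg hqQ hQy) (sr_seg hqQ hQx)).1).symm

lemma bpeq_of_initial {x y : BoundaryPath Λ} (hdeg : x.deg = y.deg)
    (h : ∀ n, x.ble n → x.seg 0 n = y.seg 0 n) : BPEq x y := by
  refine ⟨hdeg, fun p q hpq hq => ?_⟩
  have hqy : y.ble q := ble_congr hdeg hq
  have h1 := seg_fac x hpq hq
  have h2 := seg_fac y hpq hqy
  rw [h q hq] at h1
  exact ((KGraph.fac_unique h2 h1
    ((d_seg0 y (ble_mono hpq hqy)).trans (d_seg0 x (ble_mono hpq hq)).symm)
    (sr_seg hpq hqy) (sr_seg hpq hq)).2).symm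

lemma le_add_self {c p : Fin k → ℕ} : c ≤ c + p := fun i => by simp

lemma add_le_add_pi {c : Fin k → ℕ} {p q : Fin k → ℕ} (h : p ≤ q) : c + p ≤ c + q :=
  fun i => by simpa using h i

lemma ble_add {u : BoundaryPath Λ} {c q : Fin k → ℕ} {x : BoundaryPath Λ}
    (hb : ∀ i, (c i : ℕ∞) + x.deg i ≤ u.deg i) (hq : x.ble q) : u.ble (c + q) := fun i => by
  calc ((c + q) i : ℕ∞) = (c i : ℕ∞) + (q i : ℕ∞) := by push_cast; rfl
    _ ≤ (c i : ℕ∞) + x.deg i := add_le_add_right (hq i) _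
    _ ≤ u.deg i := hb i

lemma mid_fac (u : BoundaryPath Λ) {c p q : Fin k → ℕ} (hpq : p ≤ q) (hcq : u.ble (c + q)) :
    u.seg c (c + q) = Λ.comp (u.seg c (c + p)) (u.seg (c + p) (c + q)) :=
  (u.seg_comp c (c+p) (c+q) le_add_self (add_le_add_pi hpq) hcq).symm

lemma d_mid (u : BoundaryPath Λ) {c p : Fin k → ℕ} (hcp : u.ble (c + p)) :
    Λ.d (u.seg c (c + p)) = p := by
  rw [u.seg_d c (c+p) le_add_self hcp]
  funext i; simp

lemma sr_mid {u : BoundaryPath Λ} {c p q : Fin k → ℕ} (hpq : p ≤ q) (hcq : u.ble (c + q)) :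
    Λ.s (u.seg c (c + p)) = Λ.r (u.seg (c + p) (c + q)) := by
  rw [u.seg_s c (c+p) le_add_self (ble_mono (add_le_add_pi hpq) hcq),
      u.seg_r (c+p) (c+q) (add_le_add_pi hpq) hcq]

lemma seg_cut {u y : BoundaryPath Λ} {c p q : Fin k → ℕ} (hpq : p ≤ q)
    (hq : y.ble q) (hcq : u.ble (c + q)) (h : u.seg c (c + q) = y.seg 0 q) :
    u.seg c (c + p) = y.seg 0 p := by
  have h1 := mid_fac u hpq hcq
  have h2 := seg_fac y hpq hq
  rw [h] at h1
  exact (KGraph.fac_unique h1 h2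
    ((d_mid u (ble_mono (add_le_add_pi hpq) hcq)).trans (d_seg0 y (ble_mono hpq hq)).symm)
    (sr_mid hpq hcq) (sr_seg hpq hq)).1

lemma seg_transport {x u : BoundaryPath Λ} {c : Fin k → ℕ}
    (hb : ∀ i, (c i : ℕ∞) + x.deg i ≤ u.deg i)
    (h : ∀ t, x.ble t → u.seg c (c + t) = x.seg 0 t) :
    ∀ p q, p ≤ q → x.ble q → u.seg (c + p) (c + q) = x.seg p q := by
  intro p q hpq hq
  have hcq : u.ble (c + q) := ble_add hb hq
  have h1 := mid_fac u hpq hcq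
  rw [h q hq] at h1
  have h2 := seg_fac x hpq hq
  have hfirst : Λ.d (u.seg c (c + p)) = Λ.d (x.seg 0 p) :=
    (d_mid u (ble_mono (add_le_add_pi hpq) hcq)).trans (d_seg0 x (ble_mono hpq hq)).symm
  exact (KGraph.fac_unique h1 h2 hfirst (sr_mid hpq hcq) (sr_seg hpq hq)).2

lemma bpeq_refl (x : BoundaryPath Λ) : BPEq x x := ⟨rfl, fun _ _ _ _ => rfl⟩

lemma bpeq_symm {x y : BoundaryPath Λ} (h : BPEq x y) : BPEq y x :=
  ⟨h.1.symm, fun p q hpq hq => (h.2 p q hpq (fun i => h.1 ▸ hq i)).symm⟩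

end BoundaryPath

open BoundaryPath in
lemma isExtension_unique {k : ℕ} {Λ : KGraph k} {μ : Λ.Path} {x y z : BoundaryPath Λ}
    (hy : IsExtension Λ μ x y) (hz : IsExtension Λ μ x z) : BPEq y z := by
  have hdeg : y.deg = z.deg := funext fun i => (hy.1 i).trans (hz.1 i).symm
  refine bpeq_of_initial hdeg (fun q hq => ?_)
  set a := Λ.d μ with ha
  set m : Fin k → ℕ := fun i => max (q i) (a i) - a i with hm
  have hq' : ∀ i, (q i : ℕ∞) ≤ (a i : ℕ∞) + x.deg i := fun i => by
    rw [← hy.1 i]; exact hq i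
  have hxm : x.ble m := fun i => enat_sub_le (hq' i)
  have hbm : ∀ i, (a i : ℕ∞) + x.deg i ≤ y.deg i := fun i => le_of_eq (hy.1 i).symm
  have ham : y.ble (a + m) := ble_add hbm hxm
  have hkey : y.seg 0 (a + m) = z.seg 0 (a + m) := by
    have e1 := seg_fac y (le_add_self (c := a) (p := m)) ham
    have e2 := seg_fac z (le_add_self (c := a) (p := m)) (ble_congr hdeg ham)
    rw [e1, e2, hy.2.1, hz.2.1, hy.2.2 m hxm, hz.2.2 m hxm]
  have hqam : q ≤ a + m := fun i => by
    simp only [Pi.add_apply, hm]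
    omega
  exact initial_cut hqam ham (ble_congr hdeg ham) hkey

namespace KGraph

lemma peq_refl {k : ℕ} (Λ : KGraph k) (μ : Λ.Path) : Λ.peq μ μ :=
  ⟨rfl, fun _ _ _ _ hy hz => isExtension_unique hy hz⟩

lemma peq_symm {k : ℕ} {Λ : KGraph k} {μ ν : Λ.Path} (h : Λ.peq μ ν) : Λ.peq ν μ :=
  ⟨h.1.symm, fun x y z hx hy hz =>
    BoundaryPath.bpeq_symm (h.2 x z y (hx.trans h.1.symm) hz hy)⟩

end KGraph

namespace KGraph

open BoundaryPath

variable {k : ℕ}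

/-- Build a boundary path from a coherent family of initial segments. -/
noncomputable def mkBP (Λ : KGraph k) (deg : Fin k → ℕ∞) (c : (Fin k → ℕ) → Λ.Path)
    (hd : ∀ n, (∀ i, (n i : ℕ∞) ≤ deg i) → Λ.d (c n) = n)
    (hco : ∀ n N, n ≤ N → (∀ i, (N i : ℕ∞) ≤ deg i) → c n = Λ.ipart (c N) n)
    (hb : ∀ p, (∀ i, (p i : ℕ∞) ≤ deg i) → ∀ i, (p i : ℕ∞) = deg i →
      ∀ e, Λ.r e = Λ.s (c p) → Λ.d e ≠ Pi.single i 1) :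
    BoundaryPath Λ where
  deg := deg
  seg p q := @dite _ (p ≤ q ∧ ∀ i, (q i : ℕ∞) ≤ deg i) (Classical.dec _)
    (fun _ => Λ.tpart (c q) p) (fun _ => c 0)
  seg_d p q hpq hq := by
    rw [dif_pos ⟨hpq, hq⟩]
    have hple : p ≤ Λ.d (c q) := by rw [hd q hq]; exact hpq
    rw [(fpair_spec (c q) hple).2.1, hd q hq]
  seg_r p q hpq hq := by
    have hp : ∀ i, (p i : ℕ∞) ≤ deg i := fun i => le_trans (Nat.cast_le.mpr (hpq i)) (hq i)
    rw [dif_pos ⟨hpq, hq⟩, dif_pos ⟨le_refl p, hp⟩]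
    have hple : p ≤ Λ.d (c q) := by rw [hd q hq]; exact hpq
    have hple' : p ≤ Λ.d (c p) := by rw [hd p hp]
    have h1 : Λ.tpart (c p) p = Λ.s (c p) := by
      have h := tpart_full (c p); rwa [hd p hp] at h
    rw [h1, ← (fpair_spec (c q) hple).2.2.1, ← hco p q hpq hq]
  seg_s p q hpq hq := by
    have hp : ∀ i, (p i : ℕ∞) ≤ deg i := fun i => le_trans (Nat.cast_le.mpr (hpq i)) (hq i)
    rw [dif_pos ⟨hpq, hq⟩, dif_pos ⟨le_refl q, hq⟩]
    have hple : p ≤ Λ.d (c q) := by rw [hd q hq]; exact hpq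
    have h1 : Λ.tpart (c q) q = Λ.s (c q) := by
      have h := tpart_full (c q); rwa [hd q hq] at h
    rw [h1, s_tpart hple]
  seg_comp p q t hpq hqt ht := by
    have hq : ∀ i, (q i : ℕ∞) ≤ deg i := fun i => le_trans (Nat.cast_le.mpr (hqt i)) (ht i)
    rw [dif_pos ⟨hpq, hq⟩, dif_pos ⟨hqt, ht⟩, dif_pos ⟨le_trans hpq hqt, ht⟩]
    have hple : p ≤ Λ.d (c q) := by rw [hd q hq]; exact hpq
    have hqle : q ≤ Λ.d (c t) := by rw [hd t ht]; exact hqt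
    have hple' : p ≤ Λ.d (c t) := le_trans hple (by rw [hd q hq, hd t ht]; exact hqt)
    have h1 : c t = Λ.comp (c q) (Λ.tpart (c t) q) := by
      conv_lhs => rw [(fpair_spec (c t) hqle).2.2.2]
      rw [← hco q t hqt ht]
    have h2 : c q = Λ.comp (c p) (Λ.tpart (c q) p) := by
      conv_lhs => rw [(fpair_spec (c q) hple).2.2.2]
      rw [← hco p q hpq hq]
    have hs1 : Λ.s (c p) = Λ.r (Λ.tpart (c q) p) := by
      rw [hco p q hpq hq]; exact (fpair_spec (c q) hple).2.2.1
    have hs2 : Λ.s (Λ.tpart (c q) p) = Λ.r (Λ.tpart (c t) q) := by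
      rw [s_tpart hple, hco q t hqt ht]; exact (fpair_spec (c t) hqle).2.2.1
    have h3 : c t = Λ.comp (c p) (Λ.comp (Λ.tpart (c q) p) (Λ.tpart (c t) q)) := by
      rw [← Λ.comp_assoc _ _ _ hs1 hs2, ← h2]; exact h1
    have hs3 : Λ.s (c p) = Λ.r (Λ.comp (Λ.tpart (c q) p) (Λ.tpart (c t) q)) := by
      rw [Λ.r_comp _ _ hs2]; exact hs1
    have hp : ∀ i, (p i : ℕ∞) ≤ deg i := fun i => le_trans (Nat.cast_le.mpr (hpq i)) (hq i)
    exact ((fpair_unique (hd p hp) hs3 h3).2).symm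
  boundary p hp i hpi e hre := by
    rw [dif_pos ⟨le_refl p, hp⟩] at hre
    have h1 : Λ.tpart (c p) p = Λ.s (c p) := by
      have h := tpart_full (c p); rwa [hd p hp] at h
    rw [h1] at hre
    exact hb p hp i hpi e hre

lemma mkBP_deg (Λ : KGraph k) (deg : Fin k → ℕ∞) (c : (Fin k → ℕ) → Λ.Path) (hd hco hb) :
    (Λ.mkBP deg c hd hco hb).deg = deg := rfl

lemma mkBP_seg_zero (Λ : KGraph k) (deg : Fin k → ℕ∞) (c : (Fin k → ℕ) → Λ.Path)
    (hd hco hb) {q : Fin k → ℕ} (hq : ∀ i, (q i : ℕ∞) ≤ deg i) :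
    (Λ.mkBP deg c hd hco hb).seg 0 q = c q := by
  show (@dite _ _ (Classical.dec _) _ _) = c q
  rw [dif_pos ⟨fun i => Nat.zero_le _, hq⟩]
  exact tpart_zero (c q)

lemma mkBP_seg_vertex (Λ : KGraph k) (deg : Fin k → ℕ∞) (c : (Fin k → ℕ) → Λ.Path)
    (hd hco hb) {p : Fin k → ℕ} (hp : ∀ i, (p i : ℕ∞) ≤ deg i) :
    (Λ.mkBP deg c hd hco hb).seg p p = Λ.s (c p) := by
  show (@dite _ _ (Classical.dec _) _ _) = Λ.s (c p)
  rw [dif_pos ⟨le_refl p, hp⟩]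
  have h := tpart_full (c p); rwa [hd p hp] at h

end KGraph

namespace KGraph

lemma mkBP_seg (Λ : KGraph k) (deg : Fin k → ℕ∞) (c : (Fin k → ℕ) → Λ.Path)
    (hd hco hb) {p q : Fin k → ℕ} (hpq : p ≤ q) (hq : ∀ i, (q i : ℕ∞) ≤ deg i) :
    (Λ.mkBP deg c hd hco hb).seg p q = Λ.tpart (c q) p := by
  show (@dite _ _ (Classical.dec _) _ _) = _
  rw [dif_pos ⟨hpq, hq⟩]

end KGraph

namespace KGraph

open BoundaryPath

variable {k : ℕ}

/-- degree of the extension `μ · x`. -/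
def extDeg {k : ℕ} (Λ : KGraph k) (μ : Λ.Path) (x : BoundaryPath Λ) : Fin k → ℕ∞ :=
  fun i => (Λ.d μ i : ℕ∞) + x.deg i

/-- the initial segment of degree `n ⊔ d μ` of the extension `μ · x`. -/
noncomputable def extC {k : ℕ} (Λ : KGraph k) (μ : Λ.Path) (x : BoundaryPath Λ)
    (n : Fin k → ℕ) : Λ.Path :=
  Λ.comp μ (x.seg 0 (fun i => max (n i) (Λ.d μ i) - Λ.d μ i))

lemma extBP_aux {Λ : KGraph k} {μ : Λ.Path} {x : BoundaryPath Λ}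
    (hx : x.seg 0 0 = Λ.s μ) {n : Fin k → ℕ}
    (hn : ∀ i, (n i : ℕ∞) ≤ Λ.extDeg μ x i) :
    x.ble (fun i => max (n i) (Λ.d μ i) - Λ.d μ i) ∧
      Λ.s μ = Λ.r (x.seg 0 (fun i => max (n i) (Λ.d μ i) - Λ.d μ i)) ∧
      Λ.d (Λ.extC μ x n) = n ⊔ Λ.d μ := by
  have hxm : x.ble (fun i => max (n i) (Λ.d μ i) - Λ.d μ i) := fun i => enat_sub_le (hn i)
  have hsr : Λ.s μ = Λ.r (x.seg 0 (fun i => max (n i) (Λ.d μ i) - Λ.d μ i)) := by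
    rw [x.seg_r 0 _ (fun _ => Nat.zero_le _) hxm, hx]
  refine ⟨hxm, hsr, ?_⟩
  rw [extC, Λ.d_comp _ _ hsr, d_seg0 x hxm]
  funext i
  simp only [Pi.add_apply, Pi.sup_apply]
  omega

/-- The extension `μ · x` of a boundary path `x` by a finite path `μ`. -/
noncomputable def extBP {Λ : KGraph k} (hlc : Λ.LocallyConvex) (μ : Λ.Path)
    (x : BoundaryPath Λ) (hx : x.seg 0 0 = Λ.s μ) : BoundaryPath Λ :=
  Λ.mkBP (Λ.extDeg μ x) (fun n => Λ.ipart (Λ.extC μ x n) n)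
    (by
      intro n hn
      obtain ⟨hxm, hsr, hdC⟩ := extBP_aux hx hn
      exact (fpair_spec _ (by rw [hdC]; exact le_sup_left)).1)
    (by
      intro n N hnN hN
      have hn : ∀ i, (n i : ℕ∞) ≤ Λ.extDeg μ x i := fun i =>
        le_trans (Nat.cast_le.mpr (hnN i)) (hN i)
      obtain ⟨hxm, hsr, hdC⟩ := extBP_aux hx hn
      obtain ⟨hxM, hsR, hdCM⟩ := extBP_aux hx hN
      have hmM : (fun i => max (n i) (Λ.d μ i) - Λ.d μ i) ≤
          (fun i => max (N i) (Λ.d μ i) - Λ.d μ i) := fun i => by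
        have hni : n i ≤ N i := hnN i
        dsimp only
        omega
      have hassoc : Λ.extC μ x N = Λ.comp (Λ.extC μ x n)
          (x.seg (fun i => max (n i) (Λ.d μ i) - Λ.d μ i)
                 (fun i => max (N i) (Λ.d μ i) - Λ.d μ i)) := by
        rw [extC, extC, seg_fac x hmM hxM, ← Λ.comp_assoc _ _ _ hsr (sr_seg hmM hxM)]
      have hsC : Λ.s (Λ.extC μ x n) = Λ.r (x.seg (fun i => max (n i) (Λ.d μ i) - Λ.d μ i)
          (fun i => max (N i) (Λ.d μ i) - Λ.d μ i)) := by
        rw [extC, Λ.s_comp _ _ hsr]; exact sr_seg hmM hxM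
      have hip : Λ.ipart (Λ.extC μ x N) (n ⊔ Λ.d μ) = Λ.extC μ x n := by
        rw [hassoc, ← hdC]
        exact (ipart_comp hsC).1
      have h1 : Λ.ipart (Λ.extC μ x n) n = Λ.ipart (Λ.extC μ x N) n := by
        conv_lhs => rw [← hip]
        exact ipart_ipart le_sup_left (by rw [hdCM]; exact sup_le_sup_right hnN _)
      have h2 : Λ.ipart (Λ.ipart (Λ.extC μ x N) N) n = Λ.ipart (Λ.extC μ x N) n :=
        ipart_ipart hnN (by rw [hdCM]; exact le_sup_left)
      show Λ.ipart (Λ.extC μ x n) n = Λ.ipart (Λ.ipart (Λ.extC μ x N) N) n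
      rw [h1]
      exact h2.symm)
    (by
      intro p hp i hpi e hre hde
      obtain ⟨hxm, hsr, hdC⟩ := extBP_aux hx hp
      cases hdx : x.deg i with
      | top => rw [extDeg, hdx] at hpi; simp at hpi
      | coe xd =>
        have hpa : p i = Λ.d μ i + xd := by
          rw [extDeg, hdx] at hpi
          exact_mod_cast hpi
        have hple : p ≤ Λ.d (Λ.extC μ x p) := by rw [hdC]; exact le_sup_left
        obtain ⟨hd1, hd2, hs1, hc1⟩ := fpair_spec (Λ.extC μ x p) hple
        have hρz : Λ.d (Λ.tpart (Λ.extC μ x p) p) i = 0 := by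
          rw [hd2, hdC]; simp only [Pi.sub_apply, Pi.sup_apply]; omega
        have h1 : Λ.HasEdge (Λ.r (Λ.tpart (Λ.extC μ x p) p)) i := ⟨e, by rw [hre, hs1], hde⟩
        have h2 := hasEdge_s hlc hρz h1
        rw [s_tpart hple, extC, Λ.s_comp _ _ hsr,
          x.seg_s 0 _ (fun _ => Nat.zero_le _) hxm] at h2
        obtain ⟨e', hre', hde'⟩ := h2
        refine x.boundary _ hxm i ?_ e' hre' hde'
        show ((max (p i) (Λ.d μ i) - Λ.d μ i : ℕ) : ℕ∞) = x.deg i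
        rw [hdx, (by omega : max (p i) (Λ.d μ i) - Λ.d μ i = xd)])

lemma extBP_isExt {Λ : KGraph k} (hlc : Λ.LocallyConvex) (μ : Λ.Path)
    (x : BoundaryPath Λ) (hx : x.seg 0 0 = Λ.s μ) :
    IsExtension Λ μ x (extBP hlc μ x hx) := by
  unfold extBP
  have hz : (fun i => max (Λ.d μ i) (Λ.d μ i) - Λ.d μ i) = (0 : Fin k → ℕ) := by
    funext i; simp
  have hCa : Λ.extC μ x (Λ.d μ) = μ := by
    rw [extC, hz, hx, Λ.comp_id]
  refine ⟨fun i => rfl, ?_, ?_⟩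
  · have hble : ∀ i, ((Λ.d μ i : ℕ) : ℕ∞) ≤ Λ.extDeg μ x i := fun i => le_self_add
    rw [mkBP_seg_zero Λ _ _ _ _ _ hble]
    rw [hCa]
    exact ipart_full μ
  · intro p hple
    have hap : ∀ i, (((Λ.d μ + p) i : ℕ) : ℕ∞) ≤ Λ.extDeg μ x i := fun i => by
      rw [extDeg]
      push_cast
      exact (Nat.cast_add _ _).trans_le (add_le_add_right (hple i) _)
    rw [mkBP_seg Λ _ _ _ _ _ BoundaryPath.le_add_self hap]
    have hmp : (fun i => max ((Λ.d μ + p) i) (Λ.d μ i) - Λ.d μ i) = p := by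
      funext i; simp only [Pi.add_apply]; omega
    have hsr : Λ.s μ = Λ.r (x.seg 0 p) := by
      rw [x.seg_r 0 p (fun _ => Nat.zero_le _) hple, hx]
    have hC : Λ.extC μ x (Λ.d μ + p) = Λ.comp μ (x.seg 0 p) := by
      rw [extC, hmp]
    have hdC : Λ.d (Λ.extC μ x (Λ.d μ + p)) = Λ.d μ + p := by
      rw [hC, Λ.d_comp _ _ hsr, d_seg0 x hple]
    have hipfull : Λ.ipart (Λ.extC μ x (Λ.d μ + p)) (Λ.d μ + p) = Λ.extC μ x (Λ.d μ + p) := by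
      have h := ipart_full (Λ.extC μ x (Λ.d μ + p))
      rwa [hdC] at h
    rw [hipfull, hC]
    exact (ipart_comp hsr).2

lemma extBP_seg00 {Λ : KGraph k} (hlc : Λ.LocallyConvex) (μ : Λ.Path)
    (x : BoundaryPath Λ) (hx : x.seg 0 0 = Λ.s μ) :
    (extBP hlc μ x hx).seg 0 0 = Λ.r μ := by
  unfold extBP
  have h0 : ∀ i, (((0 : Fin k → ℕ) i : ℕ) : ℕ∞) ≤ Λ.extDeg μ x i := fun i => by simp
  rw [mkBP_seg_zero Λ _ _ _ _ _ h0]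
  have hsr := (extBP_aux hx h0).2.1
  rw [ipart_zero, extC, Λ.r_comp _ _ hsr]

lemma extBP_deg {Λ : KGraph k} (hlc : Λ.LocallyConvex) (μ : Λ.Path)
    (x : BoundaryPath Λ) (hx : x.seg 0 0 = Λ.s μ) (i : Fin k) :
    (extBP hlc μ x hx).deg i = (Λ.d μ i : ℕ∞) + x.deg i := rfl

end KGraph

namespace KGraph

open BoundaryPath

variable {k : ℕ}

lemma exists_boundary (Λ : KGraph k) (hlc : Λ.LocallyConvex)
    (hex : ∀ v, Λ.IsVertex v → ∀ n : Fin k → ℕ,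
      ∃ lam, lam ∈ Λ.boundedPaths n ∧ Λ.r lam = v)
    (t : Λ.Path) (ht : Λ.IsVertex t) :
    ∃ x : BoundaryPath Λ, x.seg 0 0 = t := by
  classical
  let step : Λ.Path → Λ.Path := fun p =>
    (hex (Λ.s p) (Λ.r_s p) (fun _ => 1)).choose
  have hstep : ∀ p, step p ∈ Λ.boundedPaths (fun _ => 1) ∧ Λ.r (step p) = Λ.s p :=
    fun p => (hex (Λ.s p) (Λ.r_s p) (fun _ => 1)).choose_spec
  let F : ℕ → Λ.Path := fun j => Nat.rec t (fun _ p => Λ.comp p (step p)) j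
  have hFsucc : ∀ j, F (j+1) = Λ.comp (F j) (step (F j)) := fun _ => rfl
  have hdt : Λ.d t = 0 := by rw [← ht, Λ.d_r]
  have hst : Λ.s t = t := by rw [← ht, Λ.s_r]
  have hinv : ∀ j, F j ∈ Λ.boundedPaths (fun _ => j) ∧ Λ.r (F j) = t := by
    intro j
    induction j with
    | zero =>
      exact ⟨⟨by rw [show F 0 = t from rfl, hdt]; intro i; simp,
        fun i hi => absurd hi (by simp [show F 0 = t from rfl, hdt])⟩, ht⟩
    | succ j ih =>
      have hs : Λ.s (F j) = Λ.r (step (F j)) := (hstep (F j)).2.symm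
      refine ⟨?_, by rw [hFsucc, Λ.r_comp _ _ hs, ih.2]⟩
      have h := boundedPaths_comp ih.1 (hstep (F j)).1 hs
      have heq : ((fun _ => j) + (fun _ => 1) : Fin k → ℕ) = (fun _ => j+1) := rfl
      rw [hFsucc]
      rwa [heq] at h
  have hchain : ∀ j j', j ≤ j' → ∃ ρ, Λ.s (F j) = Λ.r ρ ∧ F j' = Λ.comp (F j) ρ := by
    intro j j' hj
    induction j', hj using Nat.le_induction with
    | base => exact ⟨Λ.s (F j), (Λ.r_s _).symm, (Λ.comp_id _).symm⟩
    | succ j' hj ih =>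
      obtain ⟨ρ, hρ1, hρ2⟩ := ih
      have hsρ : Λ.s ρ = Λ.r (step (F j')) := by
        rw [(hstep (F j')).2, hρ2, Λ.s_comp _ _ hρ1]
      refine ⟨Λ.comp ρ (step (F j')), ?_, ?_⟩
      · rw [Λ.r_comp _ _ hsρ]; exact hρ1
      · rw [hFsucc j', ← Λ.comp_assoc _ _ _ hρ1 hsρ, ← hρ2]
  have hmono : ∀ j j', j ≤ j' → Λ.d (F j) ≤ Λ.d (F j') := by
    intro j j' hj
    obtain ⟨ρ, hρ1, hρ2⟩ := hchain j j' hj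
    rw [hρ2, Λ.d_comp _ _ hρ1]
    exact fun i => by simp only [Pi.add_apply]; omega
  set deg : Fin k → ℕ∞ := fun i => ⨆ j, (Λ.d (F j) i : ℕ∞) with hdegdef
  have hJ : ∀ n : Fin k → ℕ, (∀ i, (n i : ℕ∞) ≤ deg i) → ∃ j, n ≤ Λ.d (F j) := by
    intro n hn
    have hji : ∀ i, ∃ j, n i ≤ Λ.d (F j) i := fun i => exists_le_of_le_iSup (hn i)
    choose f hf using hji
    exact ⟨Finset.univ.sup f, fun i =>
      le_trans (hf i) (hmono (f i) _ (Finset.le_sup (Finset.mem_univ i)) i)⟩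
  let c : (Fin k → ℕ) → Λ.Path := fun n =>
    if hn : ∀ i, (n i : ℕ∞) ≤ deg i then Λ.ipart (F (hJ n hn).choose) n else t
  have hkey : ∀ j1 j2 : ℕ, j1 ≤ j2 → ∀ n, n ≤ Λ.d (F j1) →
      Λ.ipart (F j2) n = Λ.ipart (F j1) n := by
    intro j1 j2 h12 n hn1
    obtain ⟨ρ, hρ1, hρ2⟩ := hchain j1 j2 h12
    rw [hρ2]
    exact ipart_comp_left hn1 hρ1
  have hwd : ∀ n (hn : ∀ i, (n i : ℕ∞) ≤ deg i) (j : ℕ), n ≤ Λ.d (F j) →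
      c n = Λ.ipart (F j) n := by
    intro n hn j hj
    have h0 := (hJ n hn).choose_spec
    have e1 : c n = Λ.ipart (F (hJ n hn).choose) n := dif_pos hn
    rw [e1,
      ← hkey ((hJ n hn).choose) (max (hJ n hn).choose j) (le_max_left _ _) n h0,
      hkey j (max (hJ n hn).choose j) (le_max_right _ _) n hj]
  have hd : ∀ n, (∀ i, (n i : ℕ∞) ≤ deg i) → Λ.d (c n) = n := by
    intro n hn
    rw [hwd n hn _ (hJ n hn).choose_spec]
    exact (fpair_spec _ (hJ n hn).choose_spec).1
  have hco : ∀ n N, n ≤ N → (∀ i, (N i : ℕ∞) ≤ deg i) → c n = Λ.ipart (c N) n := by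
    intro n N hnN hN
    have hn : ∀ i, (n i : ℕ∞) ≤ deg i := fun i =>
      le_trans (Nat.cast_le.mpr (hnN i)) (hN i)
    obtain ⟨j, hj⟩ := hJ N hN
    rw [hwd N hN j hj, hwd n hn j (le_trans hnN hj)]
    exact (ipart_ipart hnN hj).symm
  have hb : ∀ p, (∀ i, (p i : ℕ∞) ≤ deg i) → ∀ i, (p i : ℕ∞) = deg i →
      ∀ e, Λ.r e = Λ.s (c p) → Λ.d e ≠ Pi.single i 1 := by
    intro p hp i hpi e hre hde
    obtain ⟨j0, hj0⟩ := hJ p hp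
    have hup : ∀ j, Λ.d (F j) i ≤ p i := fun j => by
      have h1 : (Λ.d (F j) i : ℕ∞) ≤ deg i := le_iSup (fun j => ((Λ.d (F j) i : ℕ∞))) j
      rw [← hpi] at h1
      exact Nat.cast_le.mp h1
    set J := max j0 (p i + 1) with hJdef
    have hpJ : p ≤ Λ.d (F J) := le_trans hj0 (hmono j0 J (le_max_left _ _))
    have hdJ : Λ.d (F J) i = p i := le_antisymm (hup J) (hpJ i)
    have hlt : Λ.d (F J) i < J := by
      have : p i + 1 ≤ J := le_max_right _ _
      omega
    obtain ⟨hd1, hd2, hs1, hc1⟩ := fpair_spec (F J) hpJ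
    have hρz : Λ.d (Λ.tpart (F J) p) i = 0 := by
      rw [hd2]; simp only [Pi.sub_apply]; omega
    have h1 : Λ.HasEdge (Λ.r (Λ.tpart (F J) p)) i := by
      refine ⟨e, ?_, hde⟩
      rw [hre, hwd p hp J hpJ, hs1]
    have h2 := hasEdge_s hlc hρz h1
    rw [s_tpart hpJ] at h2
    obtain ⟨e', hre', hde'⟩ := h2
    exact (hinv J).1.2 i hlt e' hre' hde'
  refine ⟨Λ.mkBP deg c hd hco hb, ?_⟩
  have h0 : ∀ i, (((0 : Fin k → ℕ) i : ℕ) : ℕ∞) ≤ deg i := fun i => by simp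
  rw [mkBP_seg_vertex Λ deg c hd hco hb h0]
  have hc0 : c 0 = t := by
    rw [hwd 0 h0 0 (by rw [show F 0 = t from rfl, hdt]),
      show F 0 = t from rfl]
    rw [ipart_zero, ht]
  rw [hc0, hst]

end KGraph

namespace KGraph

open BoundaryPath

variable {k : ℕ}

lemma emin_cast {m : Fin k → ℕ} {e : Fin k → ℕ∞} (i : Fin k) :
    ((emin m e i : ℕ) : ℕ∞) = min ((m i : ℕ∞)) (e i) := by
  unfold emin
  refine ENat.coe_toNat ?_
  intro h
  have h1 : min ((m i : ℕ∞)) (e i) ≤ (m i : ℕ∞) := min_le_left _ _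
  rw [h] at h1
  have h2 : (m i : ℕ∞) = ⊤ := top_le_iff.mp h1
  exact (ENat.coe_ne_top (m i)) h2

lemma emin_ble {Λ : KGraph k} {m : Fin k → ℕ} (w : BoundaryPath Λ) :
    w.ble (emin m w.deg) := fun i => by
  rw [emin_cast]
  exact min_le_right _ _

lemma emin_top {m : Fin k → ℕ} {e : Fin k → ℕ∞} {i : Fin k} (h : e i = ⊤) :
    emin m e i = m i := by
  unfold emin
  rw [h]
  simp

lemma isExt_comp_left {Λ : KGraph k} {A P : Λ.Path} {x xP Y : BoundaryPath Λ}
    (hs : Λ.s A = Λ.r P)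
    (hY : IsExtension Λ (Λ.comp A P) x Y) (hxP : IsExtension Λ P x xP) :
    IsExtension Λ A xP Y := by
  have hdAP : Λ.d (Λ.comp A P) = Λ.d A + Λ.d P := Λ.d_comp _ _ hs
  have hYdeg : ∀ i, Y.deg i = (Λ.d A i : ℕ∞) + xP.deg i := by
    intro i
    rw [hY.1 i, hxP.1 i, hdAP]
    push_cast [Pi.add_apply]
    ring
  have hbY : ∀ i, (Λ.d A i : ℕ∞) + xP.deg i ≤ Y.deg i := fun i => le_of_eq (hYdeg i).symm
  have hbAP : Y.ble (Λ.d A + Λ.d P) := fun i => by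
    rw [hYdeg i, hxP.1 i]
    push_cast [Pi.add_apply]
    rw [← add_assoc]
    exact le_self_add
  have h1 : Y.seg 0 (Λ.d A + Λ.d P) = Λ.comp A P := by
    rw [← hdAP]; exact hY.2.1
  have h2 := seg_fac Y (BoundaryPath.le_add_self (c := Λ.d A) (p := Λ.d P)) hbAP
  rw [h1] at h2
  have hfu := KGraph.fac_unique h2 rfl
    (d_seg0 Y (ble_mono BoundaryPath.le_add_self hbAP))
    (sr_seg BoundaryPath.le_add_self hbAP) hs
  have hA : Y.seg 0 (Λ.d A) = A := hfu.1
  have hP : Y.seg (Λ.d A) (Λ.d A + Λ.d P) = P := hfu.2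
  refine ⟨hYdeg, hA, ?_⟩
  intro p hple
  set s0 : Fin k → ℕ := fun i => max (p i) (Λ.d P i) - Λ.d P i with hs0def
  have hs0 : x.ble s0 := fun i => by
    have h := hple i
    rw [hxP.1 i] at h
    exact enat_sub_le h
  have hqble : xP.ble (Λ.d P + s0) := fun i => by
    rw [hxP.1 i]
    push_cast [Pi.add_apply]
    exact add_le_add_right (hs0 i) _
  have hkey : Y.seg (Λ.d A) (Λ.d A + (Λ.d P + s0)) = xP.seg 0 (Λ.d P + s0) := by
    have hbig : Y.ble (Λ.d A + (Λ.d P + s0)) := ble_add hbY hqble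
    have hbig' : Y.ble ((Λ.d A + Λ.d P) + s0) := by rwa [add_assoc]
    have e1 : Y.seg (Λ.d A) ((Λ.d A + Λ.d P) + s0) =
        Λ.comp (Y.seg (Λ.d A) (Λ.d A + Λ.d P)) (Y.seg (Λ.d A + Λ.d P) ((Λ.d A + Λ.d P) + s0)) :=
      (Y.seg_comp (Λ.d A) (Λ.d A + Λ.d P) ((Λ.d A + Λ.d P) + s0)
        BoundaryPath.le_add_self BoundaryPath.le_add_self hbig').symm
    have e2 : Y.seg (Λ.d A + Λ.d P) ((Λ.d A + Λ.d P) + s0) = x.seg 0 s0 := by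
      have h := hY.2.2 s0 hs0
      rwa [hdAP] at h
    have e3 : xP.seg 0 (Λ.d P + s0) =
        Λ.comp (xP.seg 0 (Λ.d P)) (xP.seg (Λ.d P) (Λ.d P + s0)) :=
      seg_fac xP BoundaryPath.le_add_self hqble
    rw [show Λ.d A + (Λ.d P + s0) = (Λ.d A + Λ.d P) + s0 from (add_assoc _ _ _).symm,
      e1, e2, hP, e3, hxP.2.1, hxP.2.2 s0 hs0]
  have hps : p ≤ Λ.d P + s0 := fun i => by
    simp only [Pi.add_apply, hs0def]
    omega
  exact seg_cut hps hqble (ble_add hbY hqble) hkey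

lemma isExt_congr_x {Λ : KGraph k} {μ : Λ.Path} {x x' y : BoundaryPath Λ}
    (hxx' : BPEq x x') (h : IsExtension Λ μ x y) : IsExtension Λ μ x' y :=
  ⟨fun i => by rw [h.1 i, hxx'.1], h.2.1, fun p hp => by
    have hpx : x.ble p := fun i => by rw [hxx'.1]; exact hp i
    rw [h.2.2 p hpx]
    exact hxx'.2 0 p (fun _ => Nat.zero_le _) hpx⟩

lemma peq_comp {Λ : KGraph k} (hlc : Λ.LocallyConvex) {A B P Q : Λ.Path}
    (hAB : Λ.peq A B) (hPQ : Λ.peq P Q) (hAP : Λ.s A = Λ.r P) (hBQ : Λ.s B = Λ.r Q) :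
    Λ.peq (Λ.comp A P) (Λ.comp B Q) := by
  refine ⟨by rw [Λ.s_comp _ _ hAP, Λ.s_comp _ _ hBQ, hPQ.1], ?_⟩
  intro x Y₁ Y₂ hx0 hE1 hE2
  have hx0P : x.seg 0 0 = Λ.s P := by rwa [Λ.s_comp _ _ hAP] at hx0
  have hx0Q : x.seg 0 0 = Λ.s Q := by rw [hx0P, hPQ.1]
  have hxPQ : BPEq (extBP hlc P x hx0P) (extBP hlc Q x hx0Q) :=
    hPQ.2 x _ _ hx0P (extBP_isExt hlc P x hx0P) (extBP_isExt hlc Q x hx0Q)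
  have hE1' : IsExtension Λ A (extBP hlc P x hx0P) Y₁ :=
    isExt_comp_left hAP hE1 (extBP_isExt hlc P x hx0P)
  have hE2' : IsExtension Λ B (extBP hlc Q x hx0Q) Y₂ :=
    isExt_comp_left hBQ hE2 (extBP_isExt hlc Q x hx0Q)
  have hE2'' : IsExtension Λ B (extBP hlc P x hx0P) Y₂ :=
    isExt_congr_x (bpeq_symm hxPQ) hE2'
  exact hAB.2 _ Y₁ Y₂ (by rw [extBP_seg00]; exact hAP.symm) hE1' hE2''

end KGraph

namespace KGraph

open BoundaryPath

variable {k : ℕ}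

lemma peq_shrink {Λ : KGraph k} (hlc : Λ.LocallyConvex) {μ ν : Λ.Path}
    (hpeq : Λ.peq μ ν) (w : BoundaryPath Λ) (hw : w.seg 0 0 = Λ.s μ) :
    ∃ P Q : Λ.Path, Λ.peq P Q ∧ Λ.r P = Λ.s μ ∧ Λ.r Q = Λ.s μ ∧
      ∀ i, (Λ.d P i : ℤ) - (Λ.d Q i : ℤ) = (Λ.d μ i : ℤ) - (Λ.d ν i : ℤ) := by
  have hwv : w.seg 0 0 = Λ.s ν := hw.trans hpeq.1
  have hW : BPEq (extBP hlc μ w hw) (extBP hlc ν w hwv) :=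
    hpeq.2 w _ _ hw (extBP_isExt hlc μ w hw) (extBP_isExt hlc ν w hwv)
  have hdegfact : ∀ i, Λ.d μ i ≠ Λ.d ν i → w.deg i = ⊤ := by
    intro i hne
    by_contra htop
    have h1 : (Λ.d μ i : ℕ∞) + w.deg i = (Λ.d ν i : ℕ∞) + w.deg i := congrFun hW.1 i
    have h2 := WithTop.add_right_cancel htop h1
    exact hne (Nat.cast_injective (h2 : (Λ.d μ i : ℕ∞) = Λ.d ν i))
  -- notation
  set A' : Fin k → ℕ := emin (Λ.d μ) w.deg with hA'def
  set B' : Fin k → ℕ := emin (Λ.d ν) w.deg with hB'def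
  have hA'ble : w.ble A' := emin_ble w
  have hB'ble : w.ble B' := emin_ble w
  have hvec : Λ.d ν + A' = Λ.d μ + B' := by
    funext i
    simp only [Pi.add_apply, hA'def, hB'def]
    by_cases h : Λ.d μ i = Λ.d ν i
    · unfold emin; rw [h]
    · rw [emin_top (hdegfact i h), emin_top (hdegfact i h)]
      ring
  -- extension of w by μ
  have hbμ : ∀ i, (Λ.d μ i : ℕ∞) + w.deg i ≤ (extBP hlc μ w hw).deg i :=
    fun i => le_of_eq rfl
  have Ta := seg_transport hbμ ((extBP_isExt hlc μ w hw).2.2)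
  have hbνμ : ∀ i, (Λ.d ν i : ℕ∞) + w.deg i ≤ (extBP hlc μ w hw).deg i := by
    intro i
    by_cases h : Λ.d μ i = Λ.d ν i
    · rw [extBP_deg, h]
    · rw [extBP_deg, hdegfact i h]
      simp
  have keyb : ∀ t, w.ble t →
      (extBP hlc μ w hw).seg (Λ.d ν) (Λ.d ν + t) = w.seg 0 t := by
    intro t ht
    have hb1 : (extBP hlc μ w hw).ble (Λ.d ν + t) := ble_add hbνμ ht
    exact (hW.2 (Λ.d ν) (Λ.d ν + t) BoundaryPath.le_add_self hb1).trans
      ((extBP_isExt hlc ν w hwv).2.2 t ht)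
  have Tb := seg_transport hbνμ keyb
  have hν1 : (extBP hlc μ w hw).seg 0 (Λ.d ν) = ν := by
    have hb1 : (extBP hlc μ w hw).ble (Λ.d ν) := by
      have := ble_add hbνμ (ble_zero w)
      rwa [add_zero] at this
    exact (hW.2 0 (Λ.d ν) (fun _ => Nat.zero_le _) hb1).trans
      ((extBP_isExt hlc ν w hwv).2.1)
  have hμ1 : (extBP hlc μ w hw).seg 0 (Λ.d μ) = μ := (extBP_isExt hlc μ w hw).2.1
  -- the pair
  have hdP : Λ.d (w.seg 0 A') = A' := d_seg0 w hA'ble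
  have hdQ : Λ.d (w.seg 0 B') = B' := d_seg0 w hB'ble
  have hrP : Λ.r (w.seg 0 A') = Λ.s μ := by
    rw [w.seg_r 0 A' (fun _ => Nat.zero_le _) hA'ble, hw]
  have hrQ : Λ.r (w.seg 0 B') = Λ.s μ := by
    rw [w.seg_r 0 B' (fun _ => Nat.zero_le _) hB'ble, hw]
  have hsPQ : Λ.s (w.seg 0 A') = Λ.s (w.seg 0 B') := by
    rw [w.seg_s 0 A' (fun _ => Nat.zero_le _) hA'ble,
        w.seg_s 0 B' (fun _ => Nat.zero_le _) hB'ble]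
    have e1 : (extBP hlc μ w hw).seg (Λ.d ν + A') (Λ.d ν + A') = w.seg A' A' :=
      Tb A' A' (le_refl _) hA'ble
    have e2 : (extBP hlc μ w hw).seg (Λ.d μ + B') (Λ.d μ + B') = w.seg B' B' :=
      Ta B' B' (le_refl _) hB'ble
    rw [← e1, ← e2, hvec]
  have hPQcomp : Λ.comp μ (w.seg 0 B') = Λ.comp ν (w.seg 0 A') := by
    have hbB : (extBP hlc μ w hw).ble (Λ.d μ + B') := ble_add hbμ hB'ble
    have hbA : (extBP hlc μ w hw).ble (Λ.d ν + A') := ble_add hbνμ hA'ble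
    have e1 : (extBP hlc μ w hw).seg 0 (Λ.d μ + B') =
        Λ.comp ((extBP hlc μ w hw).seg 0 (Λ.d μ))
          ((extBP hlc μ w hw).seg (Λ.d μ) (Λ.d μ + B')) :=
      seg_fac _ BoundaryPath.le_add_self hbB
    have e1' : (extBP hlc μ w hw).seg (Λ.d μ) (Λ.d μ + B') = w.seg 0 B' := by
      have h := Ta 0 B' (fun _ => Nat.zero_le _) hB'ble
      rwa [add_zero] at h
    have e2 : (extBP hlc μ w hw).seg 0 (Λ.d ν + A') =
        Λ.comp ((extBP hlc μ w hw).seg 0 (Λ.d ν))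
          ((extBP hlc μ w hw).seg (Λ.d ν) (Λ.d ν + A')) :=
      seg_fac _ BoundaryPath.le_add_self hbA
    have e2' : (extBP hlc μ w hw).seg (Λ.d ν) (Λ.d ν + A') = w.seg 0 A' := by
      have h := Tb 0 A' (fun _ => Nat.zero_le _) hA'ble
      rwa [add_zero] at h
    rw [hμ1, e1'] at e1
    rw [hν1, e2'] at e2
    rw [hvec] at e2
    exact e1.symm.trans e2
  have hsνP : Λ.s ν = Λ.r (w.seg 0 A') := by rw [hrP, ← hpeq.1]
  have hsμQ : Λ.s μ = Λ.r (w.seg 0 B') := by rw [hrQ]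
  -- main peq
  refine ⟨w.seg 0 A', w.seg 0 B', ⟨hsPQ, ?_⟩, hrP, hrQ, ?_⟩
  · intro x' y' z' hx'0 hEy hEz
    have hy'P : y'.ble (Λ.d (w.seg 0 A')) := fun i => by
      rw [hEy.1 i]; exact le_self_add
    have hy0 : y'.seg 0 0 = Λ.s μ := by
      have h := y'.seg_r 0 (Λ.d (w.seg 0 A')) (fun _ => Nat.zero_le _) hy'P
      rw [hEy.2.1] at h
      rw [← h, hrP]
    have hz'Q : z'.ble (Λ.d (w.seg 0 B')) := fun i => by
      rw [hEz.1 i]; exact le_self_add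
    have hz0 : z'.seg 0 0 = Λ.s μ := by
      have h := z'.seg_r 0 (Λ.d (w.seg 0 B')) (fun _ => Nat.zero_le _) hz'Q
      rw [hEz.2.1] at h
      rw [← h, hrQ]
    have hdy' : ∀ i, y'.deg i = (A' i : ℕ∞) + x'.deg i := fun i => by
      rw [hEy.1 i, hdP]
    have hdz' : ∀ i, z'.deg i = (B' i : ℕ∞) + x'.deg i := fun i => by
      rw [hEz.1 i, hdQ]
    have hEy1 : y'.seg 0 A' = w.seg 0 A' := by have h := hEy.2.1; rwa [hdP] at h
    have hEz1 : z'.seg 0 B' = w.seg 0 B' := by have h := hEz.2.1; rwa [hdQ] at h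
    have hEy2 : ∀ s, x'.ble s → y'.seg A' (A' + s) = x'.seg 0 s := fun s hs => by
      have h := hEy.2.2 s hs
      rwa [hdP] at h
    have hEz2 : ∀ s, x'.ble s → z'.seg B' (B' + s) = x'.seg 0 s := fun s hs => by
      have h := hEz.2.2 s hs
      rwa [hdQ] at h
    -- the two extensions of y', z' by μ
    have hbY' : ∀ i, (Λ.d μ i : ℕ∞) + z'.deg i ≤ (extBP hlc μ z' hz0).deg i :=
      fun i => le_of_eq rfl
    have T'a := seg_transport hbY' ((extBP_isExt hlc μ z' hz0).2.2)
    have hz'B' : z'.ble B' := fun i => by rw [hdz' i]; exact le_self_add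
    have hy'A' : y'.ble A' := fun i => by rw [hdy' i]; exact le_self_add
    have hY'init : (extBP hlc μ z' hz0).seg 0 (Λ.d μ + B') =
        Λ.comp ν (w.seg 0 A') := by
      have hb1 : (extBP hlc μ z' hz0).ble (Λ.d μ + B') := ble_add hbY' hz'B'
      have e1 : (extBP hlc μ z' hz0).seg 0 (Λ.d μ + B') =
          Λ.comp ((extBP hlc μ z' hz0).seg 0 (Λ.d μ))
            ((extBP hlc μ z' hz0).seg (Λ.d μ) (Λ.d μ + B')) :=
        seg_fac _ BoundaryPath.le_add_self hb1
      rw [e1, (extBP_isExt hlc μ z' hz0).2.1,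
        (extBP_isExt hlc μ z' hz0).2.2 B' hz'B', hEz1, hPQcomp]
    have hY'init2 : (extBP hlc μ z' hz0).seg 0 (Λ.d ν + A') =
        Λ.comp ν (w.seg 0 A') := by rw [hvec]; exact hY'init
    have hbνz : (extBP hlc μ z' hz0).ble (Λ.d ν + A') := by
      have hb1 : (extBP hlc μ z' hz0).ble (Λ.d μ + B') := ble_add hbY' hz'B'
      rwa [← hvec] at hb1
    have e4 : (extBP hlc μ z' hz0).seg 0 (Λ.d ν + A') =
        Λ.comp ((extBP hlc μ z' hz0).seg 0 (Λ.d ν))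
          ((extBP hlc μ z' hz0).seg (Λ.d ν) (Λ.d ν + A')) :=
      seg_fac _ BoundaryPath.le_add_self hbνz
    have hfu := KGraph.fac_unique e4 hY'init2
      (by
        rw [d_seg0 _ (ble_mono BoundaryPath.le_add_self hbνz)])
      (sr_seg BoundaryPath.le_add_self hbνz) hsνP
    have hYb : (extBP hlc μ z' hz0).seg 0 (Λ.d ν) = ν := hfu.1
    have hYbP : (extBP hlc μ z' hz0).seg (Λ.d ν) (Λ.d ν + A') = w.seg 0 A' := hfu.2
    -- deg identity for the ν-extension structure
    have hY'deg : ∀ i, (extBP hlc μ z' hz0).deg i = (Λ.d ν i : ℕ∞) + y'.deg i := by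
      intro i
      rw [extBP_deg, hdz' i, hdy' i]
      rw [← add_assoc, ← add_assoc]
      have hv : Λ.d ν i + A' i = Λ.d μ i + B' i := by
        have := congrFun hvec i
        simpa [Pi.add_apply] using this
      congr 1
      exact_mod_cast (by omega : Λ.d μ i + B' i = Λ.d ν i + A' i)
    have hbν : ∀ i, (Λ.d ν i : ℕ∞) + y'.deg i ≤ (extBP hlc μ z' hz0).deg i :=
      fun i => le_of_eq (hY'deg i).symm
    have hνY'3 : ∀ p, y'.ble p →
        (extBP hlc μ z' hz0).seg (Λ.d ν) (Λ.d ν + p) = y'.seg 0 p := by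
      intro p hple
      set s0 : Fin k → ℕ := fun i => max (p i) (A' i) - A' i with hs0def
      have hs0 : x'.ble s0 := fun i => by
        have h := hple i
        rw [hdy' i] at h
        exact enat_sub_le h
      have hqy : y'.ble (A' + s0) := fun i => by
        rw [hdy' i]
        push_cast [Pi.add_apply]
        exact add_le_add_right (hs0 i) _
      have hqz : z'.ble (B' + s0) := fun i => by
        rw [hdz' i]
        push_cast [Pi.add_apply]
        exact add_le_add_right (hs0 i) _
      have hkeyq : (extBP hlc μ z' hz0).seg (Λ.d ν) (Λ.d ν + (A' + s0)) =
          y'.seg 0 (A' + s0) := by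
        have hbig : (extBP hlc μ z' hz0).ble ((Λ.d ν + A') + s0) := by
          rw [add_assoc]
          exact ble_add hbν hqy
        have e5 : (extBP hlc μ z' hz0).seg (Λ.d ν) ((Λ.d ν + A') + s0) =
            Λ.comp ((extBP hlc μ z' hz0).seg (Λ.d ν) (Λ.d ν + A'))
              ((extBP hlc μ z' hz0).seg (Λ.d ν + A') ((Λ.d ν + A') + s0)) :=
          ((extBP hlc μ z' hz0).seg_comp (Λ.d ν) (Λ.d ν + A') ((Λ.d ν + A') + s0)
            BoundaryPath.le_add_self BoundaryPath.le_add_self hbig).symm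
        have e6 : (extBP hlc μ z' hz0).seg (Λ.d ν + A') ((Λ.d ν + A') + s0) =
            z'.seg B' (B' + s0) := by
          rw [hvec, show (Λ.d μ + B') + s0 = Λ.d μ + (B' + s0) from add_assoc _ _ _]
          exact T'a B' (B' + s0) BoundaryPath.le_add_self hqz
        have e7 : y'.seg 0 (A' + s0) =
            Λ.comp (y'.seg 0 A') (y'.seg A' (A' + s0)) :=
          seg_fac y' BoundaryPath.le_add_self hqy
        rw [show Λ.d ν + (A' + s0) = (Λ.d ν + A') + s0 from (add_assoc _ _ _).symm,
          e5, e6, hYbP, hEz2 s0 hs0, e7, hEy1, hEy2 s0 hs0]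
      have hps : p ≤ A' + s0 := fun i => by
        simp only [Pi.add_apply, hs0def]
        omega
      exact seg_cut hps hqy (ble_add hbν hqy) hkeyq
    have hνY' : IsExtension Λ ν y' (extBP hlc μ z' hz0) := ⟨hY'deg, hYb, hνY'3⟩
    have hYY' : BPEq (extBP hlc μ y' hy0) (extBP hlc μ z' hz0) :=
      hpeq.2 y' _ _ hy0 (extBP_isExt hlc μ y' hy0) hνY'
    -- conclude BPEq y' z'
    have hdeq : y'.deg = z'.deg := by
      funext i
      have h1 : (Λ.d μ i : ℕ∞) + y'.deg i = (Λ.d μ i : ℕ∞) + z'.deg i := congrFun hYY'.1 i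
      exact WithTop.add_left_cancel (ENat.coe_ne_top _) h1
    refine bpeq_of_initial hdeq (fun q hq => ?_)
    have hb1 : (extBP hlc μ y' hy0).ble (Λ.d μ + q) :=
      ble_add (fun i => le_of_eq rfl) hq
    calc y'.seg 0 q = (extBP hlc μ y' hy0).seg (Λ.d μ) (Λ.d μ + q) :=
          ((extBP_isExt hlc μ y' hy0).2.2 q hq).symm
      _ = (extBP hlc μ z' hz0).seg (Λ.d μ) (Λ.d μ + q) :=
          hYY'.2 (Λ.d μ) (Λ.d μ + q) BoundaryPath.le_add_self hb1
      _ = z'.seg 0 q :=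
          (extBP_isExt hlc μ z' hz0).2.2 q (ble_congr hdeq hq)
  · intro i
    rw [hdP, hdQ]
    by_cases h : Λ.d μ i = Λ.d ν i
    · have hab : A' i = B' i := by
        simp only [hA'def, hB'def]
        unfold emin
        rw [h]
      rw [hab, h]
      ring
    · rw [hA'def, hB'def, emin_top (hdegfact i h), emin_top (hdegfact i h)]
end KGraph

/-- Corollary 3.7, second part: If `Λ` is a locally convex
row-finite `k`-graph and `Λ^0` is a maximal tail, then `Per(Λ)` is a subgroup
of `ℤ^k`. -/
theorem statement5 {k : ℕ} (Λ : KGraph k) (hlc : Λ.LocallyConvex)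
    (hrf : Λ.RowFinite) (hmt : Λ.IsMaximalTail {v | Λ.IsVertex v}) :
    ∃ S : AddSubgroup (Fin k → ℤ), (S : Set (Fin k → ℤ)) = Λ.Per := by
  obtain ⟨hne, hvert, hher, hext, hconn⟩ := hmt
  have hex : ∀ v, Λ.IsVertex v → ∀ n : Fin k → ℕ,
      ∃ lam, lam ∈ Λ.boundedPaths n ∧ Λ.r lam = v := by
    intro v hv n
    obtain ⟨lam, hbd, hr, _⟩ := hext v hv n
    exact ⟨lam, hbd, hr⟩
  refine ⟨{ carrier := Λ.Per
            zero_mem' := ?_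
            add_mem' := ?_
            neg_mem' := ?_ }, rfl⟩
  · -- addition
    intro g h hg hh
    obtain ⟨μ₁, ν₁, h1, rfl⟩ := hg
    obtain ⟨μ₂, ν₂, h2, rfl⟩ := hh
    have hv1 : Λ.IsVertex (Λ.s μ₁) := Λ.r_s μ₁
    have hv2 : Λ.IsVertex (Λ.s μ₂) := Λ.r_s μ₂
    obtain ⟨α, β, hrα, hrβ, hsαβ⟩ := hconn (Λ.s μ₁) hv1 (Λ.s μ₂) hv2
    have hAB : Λ.peq (Λ.comp μ₁ α) (Λ.comp ν₁ α) :=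
      KGraph.peq_comp hlc h1 (Λ.peq_refl α) hrα.symm (h1.1 ▸ hrα.symm)
    have hA₂B₂ : Λ.peq (Λ.comp μ₂ β) (Λ.comp ν₂ β) :=
      KGraph.peq_comp hlc h2 (Λ.peq_refl β) hrβ.symm (h2.1 ▸ hrβ.symm)
    have hvt : Λ.IsVertex (Λ.s α) := Λ.r_s α
    obtain ⟨w, hw00⟩ := Λ.exists_boundary hlc hex (Λ.s α) hvt
    have hsA₂ : Λ.s (Λ.comp μ₂ β) = Λ.s α := by
      rw [Λ.s_comp _ _ hrβ.symm, hsαβ]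
    have hw : w.seg 0 0 = Λ.s (Λ.comp μ₂ β) := by rw [hw00, hsA₂]
    obtain ⟨P, Q, hPQ, hrP, hrQ, hdPQ⟩ := KGraph.peq_shrink hlc hA₂B₂ w hw
    have hsA : Λ.s (Λ.comp μ₁ α) = Λ.r P := by
      rw [Λ.s_comp _ _ hrα.symm, hrP, hsA₂]
    have hsB : Λ.s (Λ.comp ν₁ α) = Λ.r Q := by
      rw [Λ.s_comp _ _ (h1.1 ▸ hrα.symm : Λ.s ν₁ = Λ.r α), hrQ, hsA₂]
    refine ⟨Λ.comp (Λ.comp μ₁ α) P, Λ.comp (Λ.comp ν₁ α) Q,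
      KGraph.peq_comp hlc hAB hPQ hsA hsB, ?_⟩
    funext i
    have hd1 : Λ.d (Λ.comp (Λ.comp μ₁ α) P) i = Λ.d μ₁ i + Λ.d α i + Λ.d P i := by
      rw [Λ.d_comp _ _ hsA, Λ.d_comp _ _ hrα.symm]
      simp [Pi.add_apply]
    have hd2 : Λ.d (Λ.comp (Λ.comp ν₁ α) Q) i = Λ.d ν₁ i + Λ.d α i + Λ.d Q i := by
      rw [Λ.d_comp _ _ hsB, Λ.d_comp _ _ (h1.1 ▸ hrα.symm : Λ.s ν₁ = Λ.r α)]
      simp [Pi.add_apply]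
    have hd3 : Λ.d (Λ.comp μ₂ β) i = Λ.d μ₂ i + Λ.d β i := by
      rw [Λ.d_comp _ _ hrβ.symm]; simp [Pi.add_apply]
    have hd4 : Λ.d (Λ.comp ν₂ β) i = Λ.d ν₂ i + Λ.d β i := by
      rw [Λ.d_comp _ _ (h2.1 ▸ hrβ.symm : Λ.s ν₂ = Λ.r β)]; simp [Pi.add_apply]
    have hpq := hdPQ i
    rw [hd3, hd4] at hpq
    simp only [Pi.add_apply, hd1, hd2]
    push_cast at hpq ⊢
    linarith
  · -- zero
    obtain ⟨v, hv⟩ := hne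
    have hdv : Λ.d v = 0 := by
      have hv' : Λ.r v = v := hv
      rw [← hv', Λ.d_r]
    exact ⟨v, v, Λ.peq_refl v, by funext i; simp⟩
  · -- negation
    intro g hg
    obtain ⟨μ, ν, hp, rfl⟩ := hg
    refine ⟨ν, μ, KGraph.peq_symm hp, ?_⟩
    funext i
    simp only [Pi.neg_apply]
    ring
end

section
/- Let Λ be a locally convex row-finite k-graph with desourcification Λ̄, and let x ∈ Λ^{≤∞} be a boundary path. Then x is cofinal in Λ if and only if the infinite path [x;(0,∞)] is cofinal in Λ̄. -/
namespace KGraph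

variable {k : ℕ}

lemma vertex_parts {Λ : KGraph k} {μ : Λ.Path} (h : Λ.d μ = 0) :
    Λ.r μ = μ ∧ Λ.s μ = μ := by
  obtain ⟨p, hp, hu⟩ := Λ.factorization μ 0 0 (by simp [h])
  have h1 := hu (Λ.r μ, μ) ⟨Λ.d_r μ, h, Λ.s_r μ, (Λ.id_comp μ).symm⟩
  have h2 := hu (μ, Λ.s μ) ⟨h, Λ.d_s μ, (Λ.r_s μ).symm, (Λ.comp_id μ).symm⟩
  have := h1.trans h2.symm
  exact ⟨congrArg Prod.fst this, (congrArg Prod.snd this).symm⟩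

noncomputable def split (Λ : KGraph k) (w : Λ.Path) (a : Fin k → ℕ)
    (h : a ≤ Λ.d w) : Λ.Path × Λ.Path :=
  (Λ.factorization w a (Λ.d w - a)
    (funext fun i => (Nat.add_sub_cancel' (h i)).symm)).choose

lemma split_spec (Λ : KGraph k) (w : Λ.Path) (a : Fin k → ℕ) (h : a ≤ Λ.d w) :
    Λ.d (Λ.split w a h).1 = a ∧ Λ.d (Λ.split w a h).2 = Λ.d w - a ∧
    Λ.s (Λ.split w a h).1 = Λ.r (Λ.split w a h).2 ∧
    w = Λ.comp (Λ.split w a h).1 (Λ.split w a h).2 :=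
  (Λ.factorization w a (Λ.d w - a)
    (funext fun i => (Nat.add_sub_cancel' (h i)).symm)).choose_spec.1

lemma split_unique (Λ : KGraph k) (w : Λ.Path) (a : Fin k → ℕ) (h : a ≤ Λ.d w)
    {u v : Λ.Path} (hu : Λ.d u = a) (hsv : Λ.s u = Λ.r v)
    (hw : w = Λ.comp u v) : Λ.split w a h = (u, v) := by
  have hdv : Λ.d v = Λ.d w - a := by
    have hd := Λ.d_comp u v hsv
    rw [← hw] at hd
    funext i
    have h1 := congrFun hd i
    have h2 := congrFun hu i
    simp only [Pi.add_apply] at h1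
    simp only [Pi.sub_apply]
    omega
  exact ((Λ.factorization w a (Λ.d w - a)
    (funext fun i => (Nat.add_sub_cancel' (h i)).symm)).choose_spec.2 (u, v)
    ⟨hu, hdv, hsv, hw⟩).symm

lemma split_d1 (Λ : KGraph k) (w : Λ.Path) (a) (h : a ≤ Λ.d w) :
    Λ.d (Λ.split w a h).1 = a := (Λ.split_spec w a h).1

lemma split_d2 (Λ : KGraph k) (w : Λ.Path) (a) (h : a ≤ Λ.d w) :
    Λ.d (Λ.split w a h).2 = Λ.d w - a := (Λ.split_spec w a h).2.1

lemma split_sr (Λ : KGraph k) (w : Λ.Path) (a) (h : a ≤ Λ.d w) :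
    Λ.s (Λ.split w a h).1 = Λ.r (Λ.split w a h).2 := (Λ.split_spec w a h).2.2.1

lemma split_comp (Λ : KGraph k) (w : Λ.Path) (a) (h : a ≤ Λ.d w) :
    w = Λ.comp (Λ.split w a h).1 (Λ.split w a h).2 := (Λ.split_spec w a h).2.2.2

lemma split_r1 (Λ : KGraph k) (w : Λ.Path) (a) (h : a ≤ Λ.d w) :
    Λ.r (Λ.split w a h).1 = Λ.r w := by
  conv_rhs => rw [Λ.split_comp w a h]
  rw [Λ.r_comp _ _ (Λ.split_sr w a h)]

lemma split_s2 (Λ : KGraph k) (w : Λ.Path) (a) (h : a ≤ Λ.d w) :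
    Λ.s (Λ.split w a h).2 = Λ.s w := by
  conv_rhs => rw [Λ.split_comp w a h]
  rw [Λ.s_comp _ _ (Λ.split_sr w a h)]

lemma split_zero (Λ : KGraph k) (w : Λ.Path) (h : 0 ≤ Λ.d w) :
    Λ.split w 0 h = (Λ.r w, w) :=
  Λ.split_unique w 0 h (Λ.d_r w) (Λ.s_r w) (Λ.id_comp w).symm

lemma split_full (Λ : KGraph k) (w : Λ.Path) (h : Λ.d w ≤ Λ.d w) :
    Λ.split w (Λ.d w) h = (w, Λ.s w) :=
  Λ.split_unique w (Λ.d w) h rfl (Λ.r_s w).symm (Λ.comp_id w).symm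

/-- coherence of nested splits -/
lemma split_split (Λ : KGraph k) (w : Λ.Path) (p q : Fin k → ℕ)
    (hpq : p ≤ q) (hq : q ≤ Λ.d w) (hp : p ≤ Λ.d w)
    (hp' : p ≤ Λ.d (Λ.split w q hq).1) :
    (Λ.split (Λ.split w q hq).1 p hp').1 = (Λ.split w p hp).1 ∧
    (Λ.split w p hp).2 =
      Λ.comp (Λ.split (Λ.split w q hq).1 p hp').2 (Λ.split w q hq).2 := by
  have hsδβ : Λ.s (Λ.split (Λ.split w q hq).1 p hp').2 =
      Λ.r (Λ.split w q hq).2 := by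
    rw [Λ.split_s2, Λ.split_sr]
  have hsαδ := Λ.split_sr (Λ.split w q hq).1 p hp'
  have hrcomp := Λ.r_comp _ _ hsδβ
  have hw : w = Λ.comp (Λ.split (Λ.split w q hq).1 p hp').1
      (Λ.comp (Λ.split (Λ.split w q hq).1 p hp').2 (Λ.split w q hq).2) := by
    conv_lhs => rw [Λ.split_comp w q hq]
    conv_lhs => rw [Λ.split_comp (Λ.split w q hq).1 p hp']
    rw [Λ.comp_assoc _ _ _ hsαδ hsδβ]
  have h := Λ.split_unique w p hp (Λ.split_d1 (Λ.split w q hq).1 p hp')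
    (by rw [hrcomp]; exact hsαδ) hw
  exact ⟨(congrArg Prod.fst h).symm, congrArg Prod.snd h⟩

end KGraph
namespace KGraph

variable {k : ℕ}

noncomputable def mid (Λ : KGraph k) (w : Λ.Path) (p q : Fin k → ℕ)
    (hpq : p ≤ q) (hq : q ≤ Λ.d w) : Λ.Path :=
  (Λ.split (Λ.split w q hq).1 p
    (by rw [Λ.split_d1 w q hq]; exact hpq)).2

lemma mid_d (Λ : KGraph k) (w : Λ.Path) (p q) (hpq : p ≤ q) (hq : q ≤ Λ.d w) :
    Λ.d (Λ.mid w p q hpq hq) = q - p := by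
  rw [mid, Λ.split_d2, Λ.split_d1]

lemma split_congr (Λ : KGraph k) {w w' : Λ.Path} (h : w = w') (a)
    (ha : a ≤ Λ.d w) (ha' : a ≤ Λ.d w') : Λ.split w a ha = Λ.split w' a ha' := by
  subst h; rfl

lemma mid_self (Λ : KGraph k) (w : Λ.Path) (p) (hpq : p ≤ p) (hq : p ≤ Λ.d w) :
    Λ.mid w p p hpq hq = Λ.s (Λ.split w p hq).1 := by
  rw [mid]
  have h := Λ.split_unique (Λ.split w p hq).1 p
    (by rw [Λ.split_d1]) (Λ.split_d1 w p hq)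
    (Λ.r_s _).symm (Λ.comp_id _).symm
  rw [h]

lemma mid_r (Λ : KGraph k) (w : Λ.Path) (p q) (hpq : p ≤ q) (hq : q ≤ Λ.d w)
    (hp : p ≤ Λ.d w) :
    Λ.r (Λ.mid w p q hpq hq) = Λ.mid w p p le_rfl hp := by
  rw [mid, ← Λ.split_sr, (Λ.split_split w p q hpq hq hp _).1, mid_self]

lemma mid_s (Λ : KGraph k) (w : Λ.Path) (p q) (hpq : p ≤ q) (hq : q ≤ Λ.d w) :
    Λ.s (Λ.mid w p q hpq hq) = Λ.mid w q q le_rfl hq := by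
  rw [mid, Λ.split_s2, mid_self]

lemma mid_zero_self (Λ : KGraph k) (w : Λ.Path) (h0 : (0:Fin k → ℕ) ≤ 0)
    (hq : (0:Fin k → ℕ) ≤ Λ.d w) : Λ.mid w 0 0 h0 hq = Λ.r w := by
  rw [mid_self, Λ.split_zero, Λ.s_r]

lemma mid_full_self (Λ : KGraph k) (w : Λ.Path) (h0 : Λ.d w ≤ Λ.d w)
    (hq : Λ.d w ≤ Λ.d w) : Λ.mid w (Λ.d w) (Λ.d w) h0 hq = Λ.s w := by
  rw [mid_self, Λ.split_full]

lemma mid_zero_left (Λ : KGraph k) (w : Λ.Path) (q) (h0 : (0:Fin k → ℕ) ≤ q)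
    (hq : q ≤ Λ.d w) : Λ.mid w 0 q h0 hq = (Λ.split w q hq).1 := by
  rw [mid, Λ.split_zero, Λ.split_r1]

lemma mid_right_full (Λ : KGraph k) (w : Λ.Path) (p) (hp : p ≤ Λ.d w)
    (hq : Λ.d w ≤ Λ.d w) : Λ.mid w p (Λ.d w) hp hq = (Λ.split w p hp).2 := by
  rw [mid]
  have h1 : (Λ.split w (Λ.d w) hq).1 = w := by rw [Λ.split_full]
  congr 1 <;> simp [h1]

lemma mid_congr (Λ : KGraph k) {w w' : Λ.Path} (hww : w = w') (p q)
    (hpq : p ≤ q) (hq : q ≤ Λ.d w) (hq' : q ≤ Λ.d w') :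
    Λ.mid w p q hpq hq = Λ.mid w' p q hpq hq' := by subst hww; rfl

/-- mid only depends on an initial segment -/
lemma mid_init (Λ : KGraph k) (w : Λ.Path) (p q t) (hpq : p ≤ q) (hqt : q ≤ t)
    (ht : t ≤ Λ.d w) (hq : q ≤ Λ.d w)
    (hq2 : q ≤ Λ.d (Λ.split w t ht).1) :
    Λ.mid w p q hpq hq = Λ.mid (Λ.split w t ht).1 p q hpq hq2 := by
  rw [mid, mid]
  exact congrArg Prod.snd (Λ.split_congr
    (Λ.split_split w q t hqt ht hq hq2).1.symm p
    (by rw [Λ.split_d1]; exact hpq) (by rw [Λ.split_d1]; exact hpq))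

lemma mid_comp (Λ : KGraph k) (w : Λ.Path) (p q t) (hpq : p ≤ q) (hqt : q ≤ t)
    (ht : t ≤ Λ.d w) (hq : q ≤ Λ.d w) (hp : p ≤ t) :
    Λ.comp (Λ.mid w p q hpq hq) (Λ.mid w q t hqt ht) = Λ.mid w p t hp ht := by
  set A := (Λ.split w t ht).1 with hA
  have hdA : Λ.d A = t := Λ.split_d1 w t ht
  have hq2 : q ≤ Λ.d A := by rw [hdA]; exact hqt
  have hp2 : p ≤ Λ.d A := by rw [hdA]; exact le_trans hpq hqt
  -- rewrite the three mids in terms of A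
  have e1 : Λ.mid w p q hpq hq = Λ.mid A p q hpq hq2 :=
    Λ.mid_init w p q t hpq hqt ht hq hq2
  have e2 : Λ.mid w q t hqt ht = (Λ.split A q hq2).2 := rfl
  have e3 : Λ.mid w p t hp ht = (Λ.split A p hp2).2 := rfl
  rw [e1, e2, e3, mid]
  -- now: comp (split (split A q).1 p).2 (split A q).2 = (split A p).2
  exact (Λ.split_split A p q hpq hq2 hp2 (by rw [Λ.split_d1]; exact hpq)).2.symm

/-- mid is unchanged when the path is extended on the right -/
lemma mid_comp_right (Λ : KGraph k) (w μ : Λ.Path) (hsμ : Λ.s w = Λ.r μ)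
    (p q) (hpq : p ≤ q) (hq : q ≤ Λ.d w) (hq' : q ≤ Λ.d (Λ.comp w μ)) :
    Λ.mid (Λ.comp w μ) p q hpq hq' = Λ.mid w p q hpq hq := by
  have h1 : Λ.s (Λ.split w q hq).2 = Λ.r μ := by rw [Λ.split_s2]; exact hsμ
  have h2 : Λ.s (Λ.split w q hq).1 = Λ.r (Λ.comp (Λ.split w q hq).2 μ) := by
    rw [Λ.r_comp _ _ h1, Λ.split_sr]
  have hw : Λ.comp w μ = Λ.comp (Λ.split w q hq).1
      (Λ.comp (Λ.split w q hq).2 μ) := by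
    conv_lhs => rw [Λ.split_comp w q hq]
    rw [Λ.comp_assoc _ _ _ (Λ.split_sr w q hq) h1]
  have h := Λ.split_unique (Λ.comp w μ) q hq' (Λ.split_d1 w q hq) h2 hw
  have hfst : (Λ.split (Λ.comp w μ) q hq').1 = (Λ.split w q hq).1 := by
    rw [h]
  rw [mid, mid]
  exact congrArg Prod.snd (Λ.split_congr hfst p
    (by rw [Λ.split_d1]; exact hpq) (by rw [Λ.split_d1]; exact hpq))

end KGraph
namespace KGraph

variable {k : ℕ}

lemma exists_edge_of_d_pos (Λ : KGraph k) (μ : Λ.Path) (i : Fin k)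
    (h : 0 < Λ.d μ i) : ∃ e, Λ.r e = Λ.r μ ∧ Λ.d e = Pi.single i 1 := by
  have hle : Pi.single i 1 ≤ Λ.d μ := by
    intro j
    by_cases hj : j = i
    · subst hj; simpa using Nat.succ_le_of_lt h
    · simp [Pi.single_eq_of_ne hj]
  exact ⟨(Λ.split μ (Pi.single i 1) hle).1, Λ.split_r1 μ _ hle,
    Λ.split_d1 μ _ hle⟩

/-- In a locally convex graph, having an edge of degree `e_i` propagates
forward along paths with zero `i`-degree. -/
lemma prop_fwd (Λ : KGraph k) (hlc : Λ.LocallyConvex) (μ : Λ.Path) (i : Fin k)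
    (h0 : Λ.d μ i = 0) (he : ∃ e, Λ.r e = Λ.r μ ∧ Λ.d e = Pi.single i 1) :
    ∃ e, Λ.r e = Λ.s μ ∧ Λ.d e = Pi.single i 1 := by
  obtain ⟨N, hN⟩ : ∃ N, (∑ j, Λ.d μ j) ≤ N := ⟨_, le_rfl⟩
  induction N generalizing μ with
  | zero =>
    have hd : Λ.d μ = 0 := by
      funext j
      have : Λ.d μ j ≤ 0 := le_trans (Finset.single_le_sum
        (f := fun j => Λ.d μ j) (fun _ _ => Nat.zero_le _)
        (Finset.mem_univ j)) hN
      simpa using this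
    obtain ⟨hr, hs⟩ := vertex_parts hd
    rw [hs, ← hr]; exact he
  | succ N ih =>
    by_cases hd : Λ.d μ = 0
    · obtain ⟨hr, hs⟩ := vertex_parts hd
      rw [hs, ← hr]; exact he
    · obtain ⟨j, hj⟩ : ∃ j, Λ.d μ j ≠ 0 := by
        by_contra hc; push_neg at hc; exact hd (funext hc)
      have hji : j ≠ i := fun hcon => hj (hcon ▸ h0)
      have hle : Pi.single j 1 ≤ Λ.d μ := by
        intro j'
        by_cases hj' : j' = j
        · subst hj'; simp; omega
        · simp [Pi.single_eq_of_ne hj']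
      set f := (Λ.split μ (Pi.single j 1) hle).1 with hf
      set ρ := (Λ.split μ (Pi.single j 1) hle).2 with hρ
      obtain ⟨e, hre, hde⟩ := he
      -- local convexity at r μ : f has degree e_j, e has degree e_i
      obtain ⟨e', hre', hde'⟩ := hlc j i hji f e
        (by rw [Λ.split_r1, hre]) (Λ.split_d1 μ _ hle) hde
      have hdρ : Λ.d ρ = Λ.d μ - Pi.single j 1 := Λ.split_d2 μ _ hle
      have hsum : (∑ j', Λ.d ρ j') ≤ N := by
        have h1 : ∑ j', Λ.d ρ j' < ∑ j', Λ.d μ j' := by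
          apply Finset.sum_lt_sum (fun j' _ => by rw [hdρ]; simp [Pi.sub_apply])
          exact ⟨j, Finset.mem_univ j, by
            rw [hdρ]; simp [Pi.sub_apply, Pi.single_eq_same]; omega⟩
        omega
      have hres := ih ρ (by rw [hdρ]; simp [Pi.sub_apply, Pi.single_eq_of_ne hji.symm, h0])
        ⟨e', by rw [hre', Λ.split_sr], hde'⟩ hsum
      rw [← Λ.split_s2 μ _ hle]; exact hres

/-- `vΛ^{≤n}` is nonempty. -/
lemma exists_le_path (Λ : KGraph k) (n : Fin k → ℕ) (v : Λ.Path)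
    (hv : Λ.IsVertex v) :
    ∃ μ, Λ.r μ = v ∧ μ ∈ Λ.boundedPaths n := by
  obtain ⟨N, hN⟩ : ∃ N, (∑ j, n j) ≤ N := ⟨_, le_rfl⟩
  induction N generalizing n v with
  | zero =>
    refine ⟨v, hv, ?_, ?_⟩
    · have hd : Λ.d v = 0 := by
        have := Λ.d_r v; rwa [hv] at this
      rw [hd]; intro i; exact Nat.zero_le _
    · intro i hi
      exfalso
      have : n i ≤ 0 := le_trans (Finset.single_le_sum
        (f := fun j => n j) (fun _ _ => Nat.zero_le _) (Finset.mem_univ i)) hN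
      have hd : Λ.d v i = 0 := by
        have := Λ.d_r v; rw [hv] at this; rw [this]; rfl
      omega
  | succ N ih =>
    have hdv : Λ.d v = 0 := by have := Λ.d_r v; rwa [hv] at this
    by_cases hc : ∃ i, 0 < n i ∧ ∃ e, Λ.r e = v ∧ Λ.d e = Pi.single i 1
    · obtain ⟨i, hni, e, hre, hde⟩ := hc
      have hse : Λ.IsVertex (Λ.s e) := Λ.r_s e
      have hsum : (∑ j, (n - Pi.single i 1 : Fin k → ℕ) j) ≤ N := by
        have h1 : ∑ j, (n - Pi.single i 1 : Fin k → ℕ) j < ∑ j, n j := by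
          apply Finset.sum_lt_sum
            (fun j _ => by simp only [Pi.sub_apply]; omega)
          exact ⟨i, Finset.mem_univ i, by
            simp only [Pi.sub_apply, Pi.single_eq_same]; omega⟩
        omega
      obtain ⟨μ', hrμ', hμ'd, hμ'b⟩ := ih (n - Pi.single i 1) (Λ.s e) hse hsum
      have hcomp : Λ.s e = Λ.r μ' := hrμ'.symm
      refine ⟨Λ.comp e μ', ?_, ?_, ?_⟩
      · rw [Λ.r_comp e μ' hcomp]; exact hre
      · rw [Λ.d_comp e μ' hcomp]
        intro j
        have h2 := hμ'd j
        have h3 := congrFun hde j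
        have h4 : (Pi.single i 1 : Fin k → ℕ) j = if j = i then 1 else 0 := by
          by_cases hj : j = i
          · subst hj; simp
          · simp [Pi.single_eq_of_ne hj, hj]
        simp only [Pi.add_apply, Pi.sub_apply, h4] at h2 h3 ⊢
        by_cases hj : j = i <;> simp [hj] at h2 h3 ⊢ <;> omega
      · intro j hj
        rw [Λ.s_comp e μ' hcomp]
        rw [Λ.d_comp e μ' hcomp] at hj
        apply hμ'b j
        have h3 := congrFun hde j
        have h4 : (Pi.single i 1 : Fin k → ℕ) j = if j = i then 1 else 0 := by
          by_cases hji : j = i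
          · subst hji; simp
          · simp [Pi.single_eq_of_ne hji, hji]
        simp only [Pi.add_apply, Pi.sub_apply, h4] at h3 hj ⊢
        by_cases hji : j = i <;> simp [hji] at h3 hj ⊢ <;> omega
    · push_neg at hc
      refine ⟨v, hv, by rw [hdv]; intro i; exact Nat.zero_le _, ?_⟩
      intro i hi e hre hde
      rw [hdv] at hi
      have hvv : Λ.s v = v := by
        have := Λ.s_r v; rwa [hv] at this
      exact absurd hde (hc i (by simpa using hi) e (by rwa [hvv] at hre))

end KGraph
namespace KGraph

variable {k : ℕ}

section Chain

variable (Λ : KGraph k) (c : ℕ → Λ.Path)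

def IsChain : Prop := ∀ j, ∃ μ, Λ.s (c j) = Λ.r μ ∧ c (j+1) = Λ.comp (c j) μ

variable {Λ c}

lemma IsChain.d_mono (hc : IsChain Λ c) {j j' : ℕ} (h : j ≤ j') :
    Λ.d (c j) ≤ Λ.d (c j') := by
  induction j' with
  | zero => simp_all
  | succ n ih =>
    rcases Nat.lt_or_ge j (n+1) with h'|h'
    · obtain ⟨μ, hs, he⟩ := hc n
      have : Λ.d (c (n+1)) = Λ.d (c n) + Λ.d μ := by rw [he, Λ.d_comp _ _ hs]
      intro i
      exact le_trans (ih (by omega) i) (by rw [this]; simp)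
    · have : j = n + 1 := by omega
      subst this; exact le_rfl

lemma IsChain.mid_compat (hc : IsChain Λ c) {j j' : ℕ} (h : j ≤ j')
    (p q) (hpq : p ≤ q) (hq : q ≤ Λ.d (c j)) (hq' : q ≤ Λ.d (c j')) :
    Λ.mid (c j) p q hpq hq = Λ.mid (c j') p q hpq hq' := by
  induction j' with
  | zero =>
    have : j = 0 := by omega
    subst this; rfl
  | succ n ih =>
    rcases Nat.lt_or_ge j (n+1) with h'|h'
    · have hqn : q ≤ Λ.d (c n) := le_trans hq (hc.d_mono (by omega))
      rw [ih (by omega) hqn]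
      obtain ⟨μ, hs, he⟩ := hc n
      rw [Λ.mid_congr he p q hpq hq' (he ▸ hq')]
      exact (Λ.mid_comp_right (c n) μ hs p q hpq hqn _).symm
    · have : j = n + 1 := by omega
      subst this; rfl

open Classical in
noncomputable def chainSeg (Λ : KGraph k) (c : ℕ → Λ.Path)
    (p q : Fin k → ℕ) : Λ.Path :=
  if h : p ≤ q ∧ ∃ j, q ≤ Λ.d (c j) then
    Λ.mid (c h.2.choose) p q h.1 h.2.choose_spec
  else c 0

lemma chainSeg_eq (hc : IsChain Λ c) {p q : Fin k → ℕ} (hpq : p ≤ q) {j : ℕ}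
    (hq : q ≤ Λ.d (c j)) :
    chainSeg Λ c p q = Λ.mid (c j) p q hpq hq := by
  have hex : p ≤ q ∧ ∃ j, q ≤ Λ.d (c j) := ⟨hpq, j, hq⟩
  rw [chainSeg]
  rw [dif_pos hex]
  set j0 := hex.2.choose with hj0
  have hq0 : q ≤ Λ.d (c j0) := hex.2.choose_spec
  rcases le_total j0 j with h|h
  · exact hc.mid_compat h p q hex.1 hq0 hq
  · exact (hc.mid_compat h p q hex.1 hq hq0).symm

/-- Build a boundary path from a chain of paths. -/
noncomputable def chainBP (hc : IsChain Λ c) (deg : Fin k → ℕ∞)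
    (hle : ∀ j i, (Λ.d (c j) i : ℕ∞) ≤ deg i)
    (hex : ∀ q : Fin k → ℕ, (∀ i, (q i : ℕ∞) ≤ deg i) → ∃ j, q ≤ Λ.d (c j))
    (hbnd : ∀ p : Fin k → ℕ, (∀ i, (p i : ℕ∞) ≤ deg i) →
      ∀ i : Fin k, (p i : ℕ∞) = deg i →
      ∀ e, Λ.r e = chainSeg Λ c p p → Λ.d e ≠ Pi.single i 1) :
    BoundaryPath Λ where
  deg := deg
  seg := chainSeg Λ c
  seg_d p q hpq hq := by
    obtain ⟨j, hj⟩ := hex q hq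
    rw [chainSeg_eq hc hpq hj, Λ.mid_d]
  seg_r p q hpq hq := by
    obtain ⟨j, hj⟩ := hex q hq
    rw [chainSeg_eq hc hpq hj, chainSeg_eq hc (le_refl p) (le_trans hpq hj),
      Λ.mid_r]
  seg_s p q hpq hq := by
    obtain ⟨j, hj⟩ := hex q hq
    rw [chainSeg_eq hc hpq hj, chainSeg_eq hc (le_refl q) hj, Λ.mid_s]
  seg_comp p q t hpq hqt ht := by
    obtain ⟨j, hj⟩ := hex t ht
    have hqj : q ≤ Λ.d (c j) := le_trans hqt hj
    rw [chainSeg_eq hc hpq hqj, chainSeg_eq hc hqt hj,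
      chainSeg_eq hc (le_trans hpq hqt) hj, Λ.mid_comp]
  boundary := hbnd

lemma chainBP_deg (hc : IsChain Λ c) (deg hle hex hbnd) :
    (chainBP hc deg hle hex hbnd).deg = deg := rfl

lemma chainBP_seg (hc : IsChain Λ c) (deg hle hex hbnd) (p q) :
    (chainBP hc deg hle hex hbnd).seg p q = chainSeg Λ c p q := rfl

end Chain

end KGraph
section EminLemmas

variable {k : ℕ}

lemma emin_coe (m : Fin k → ℕ) (e : Fin k → ℕ∞) (i : Fin k) :
    (emin m e i : ℕ∞) = min (m i : ℕ∞) (e i) := by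
  have h : min ((m i : ℕ∞)) (e i) ≠ ⊤ := by
    intro hcon
    have := min_le_left ((m i : ℕ∞)) (e i)
    rw [hcon] at this
    simp at this
  rw [emin, ENat.coe_toNat h]

lemma emin_le (m : Fin k → ℕ) (e : Fin k → ℕ∞) (i : Fin k) :
    emin m e i ≤ m i := by
  have := emin_coe m e i
  have h2 : (emin m e i : ℕ∞) ≤ (m i : ℕ∞) := by rw [this]; exact min_le_left _ _
  exact_mod_cast h2

lemma emin_coe_le (m : Fin k → ℕ) (e : Fin k → ℕ∞) (i : Fin k) :
    (emin m e i : ℕ∞) ≤ e i := by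
  rw [emin_coe]; exact min_le_right _ _

lemma emin_eq_of_le (m : Fin k → ℕ) (e : Fin k → ℕ∞) (i : Fin k)
    (h : (m i : ℕ∞) ≤ e i) : emin m e i = m i := by
  have := emin_coe m e i
  rw [min_eq_left h] at this
  exact_mod_cast this

lemma emin_eq_iff_le (m : Fin k → ℕ) (e : Fin k → ℕ∞) (i : Fin k)
    (h : emin m e i = m i) : (m i : ℕ∞) ≤ e i := by
  by_contra hc
  push_neg at hc
  have h1 := emin_coe m e i
  rw [min_eq_right hc.le] at h1
  rw [h] at h1
  exact hc.ne' h1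

lemma emin_zero (e : Fin k → ℕ∞) : emin (0 : Fin k → ℕ) e = 0 := by
  funext i
  have := emin_le (0 : Fin k → ℕ) e i
  simpa using this

end EminLemmas
namespace KGraph

variable {k : ℕ}

/-- The shifted boundary path `σ^n x`. -/
def shiftBP {Λ : KGraph k} (x : BoundaryPath Λ) (n : Fin k → ℕ)
    (hn : ∀ i, (n i : ℕ∞) ≤ x.deg i) : BoundaryPath Λ where
  deg i := x.deg i - (n i : ℕ∞)
  seg p q := x.seg (p + n) (q + n)
  seg_d p q hpq hq := by
    have hq' : ∀ i, ((q + n) i : ℕ∞) ≤ x.deg i := by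
      intro i
      have h1 := hq i
      have h2 := hn i
      simp only [Pi.add_apply, Nat.cast_add]
      calc (q i : ℕ∞) + n i ≤ (x.deg i - n i) + n i := by
            exact add_le_add_left h1 _
        _ = x.deg i := tsub_add_cancel_of_le h2
    rw [x.seg_d (p + n) (q + n) (fun i => Nat.add_le_add_right (hpq i) _) hq']
    funext i
    simp only [Pi.sub_apply, Pi.add_apply]
    omega
  seg_r p q hpq hq := by
    have hq' : ∀ i, ((q + n) i : ℕ∞) ≤ x.deg i := by
      intro i
      have h1 := hq i
      have h2 := hn i
      simp only [Pi.add_apply, Nat.cast_add]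
      calc (q i : ℕ∞) + n i ≤ (x.deg i - n i) + n i := add_le_add_left h1 _
        _ = x.deg i := tsub_add_cancel_of_le h2
    exact x.seg_r (p + n) (q + n) (fun i => Nat.add_le_add_right (hpq i) _) hq'
  seg_s p q hpq hq := by
    have hq' : ∀ i, ((q + n) i : ℕ∞) ≤ x.deg i := by
      intro i
      have h1 := hq i
      have h2 := hn i
      simp only [Pi.add_apply, Nat.cast_add]
      calc (q i : ℕ∞) + n i ≤ (x.deg i - n i) + n i := add_le_add_left h1 _
        _ = x.deg i := tsub_add_cancel_of_le h2
    exact x.seg_s (p + n) (q + n) (fun i => Nat.add_le_add_right (hpq i) _) hq'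
  seg_comp p q t hpq hqt ht := by
    have ht' : ∀ i, ((t + n) i : ℕ∞) ≤ x.deg i := by
      intro i
      have h1 := ht i
      have h2 := hn i
      simp only [Pi.add_apply, Nat.cast_add]
      calc (t i : ℕ∞) + n i ≤ (x.deg i - n i) + n i := add_le_add_left h1 _
        _ = x.deg i := tsub_add_cancel_of_le h2
    exact x.seg_comp (p + n) (q + n) (t + n)
      (fun i => Nat.add_le_add_right (hpq i) _)
      (fun i => Nat.add_le_add_right (hqt i) _) ht'
  boundary p hp i hpi e hre := by
    have hp' : ∀ i', ((p + n) i' : ℕ∞) ≤ x.deg i' := by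
      intro i'
      have h1 := hp i'
      have h2 := hn i'
      simp only [Pi.add_apply, Nat.cast_add]
      calc (p i' : ℕ∞) + n i' ≤ (x.deg i' - n i') + n i' := add_le_add_left h1 _
        _ = x.deg i' := tsub_add_cancel_of_le h2
    have hpi' : ((p + n) i : ℕ∞) = x.deg i := by
      simp only [Pi.add_apply, Nat.cast_add]
      rw [hpi]
      exact tsub_add_cancel_of_le (hn i)
    exact x.boundary (p + n) hp' i hpi' e hre

lemma shiftBP_deg {Λ : KGraph k} (x : BoundaryPath Λ) (n hn) (i : Fin k) :
    (shiftBP x n hn).deg i = x.deg i - (n i : ℕ∞) := rfl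

lemma shiftBP_seg {Λ : KGraph k} (x : BoundaryPath Λ) (n hn) (p q) :
    (shiftBP x n hn).seg p q = x.seg (p + n) (q + n) := rfl

end KGraph
namespace KGraph

variable {k : ℕ} {Λ : KGraph k}

section Extend

variable (t : BoundaryPath Λ) (lam : Λ.Path)

/-- truncation of `t.deg` at level `j` -/
noncomputable def trunc (j : ℕ) : Fin k → ℕ := fun i => emin (fun _ => j) t.deg i

lemma trunc_coe_le (j : ℕ) (i : Fin k) : ((trunc t j i : ℕ∞)) ≤ t.deg i :=
  emin_coe_le _ _ i

lemma trunc_le_all (j : ℕ) : ∀ i, ((trunc t j i : ℕ∞)) ≤ t.deg i :=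
  fun i => trunc_coe_le t j i

lemma trunc_mono {j j' : ℕ} (h : j ≤ j') : trunc t j ≤ trunc t j' := by
  intro i
  have h1 := emin_coe (fun _ => j) t.deg i
  have h2 := emin_coe (fun _ => j') t.deg i
  have : (trunc t j i : ℕ∞) ≤ (trunc t j' i : ℕ∞) := by
    rw [trunc, trunc, h1, h2]
    exact min_le_min (by exact_mod_cast h) le_rfl
  exact_mod_cast this

noncomputable def extChain : ℕ → Λ.Path := fun j =>
  Λ.comp lam (t.seg 0 (trunc t j))

variable {t lam}

lemma zero_coe_le : ∀ i : Fin k, (((0 : Fin k → ℕ) i : ℕ∞)) ≤ t.deg i := by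
  intro i; simp

lemma ext_hslam (hs : Λ.s lam = t.seg 0 0) (q : Fin k → ℕ)
    (hq : ∀ i, ((q i : ℕ∞)) ≤ t.deg i) :
    Λ.s lam = Λ.r (t.seg 0 q) := by
  rw [t.seg_r 0 q (fun i => Nat.zero_le _) hq]; exact hs

lemma extChain_d (hs : Λ.s lam = t.seg 0 0) (j : ℕ) :
    Λ.d (extChain t lam j) = Λ.d lam + trunc t j := by
  rw [extChain, Λ.d_comp _ _ (ext_hslam hs _ (trunc_le_all t j)),
    t.seg_d 0 (trunc t j) (fun i => Nat.zero_le _) (trunc_le_all t j)]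
  funext i
  simp [Pi.add_apply, Pi.sub_apply]

lemma extChain_isChain (hs : Λ.s lam = t.seg 0 0) :
    IsChain Λ (extChain t lam) := by
  intro j
  refine ⟨t.seg (trunc t j) (trunc t (j+1)), ?_, ?_⟩
  · rw [extChain, Λ.s_comp _ _ (ext_hslam hs _ (trunc_le_all t j)),
      t.seg_s 0 (trunc t j) (fun i => Nat.zero_le _) (trunc_le_all t j),
      t.seg_r (trunc t j) (trunc t (j+1)) (trunc_mono t (Nat.le_succ j))
        (trunc_le_all t (j+1))]
  · rw [extChain, extChain,
      ← t.seg_comp 0 (trunc t j) (trunc t (j+1)) (fun i => Nat.zero_le _)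
        (trunc_mono t (Nat.le_succ j)) (trunc_le_all t (j+1)),
      Λ.comp_assoc lam _ _ (ext_hslam hs _ (trunc_le_all t j))
        (by rw [t.seg_s 0 (trunc t j) (fun i => Nat.zero_le _) (trunc_le_all t j),
          t.seg_r (trunc t j) (trunc t (j+1)) (trunc_mono t (Nat.le_succ j))
            (trunc_le_all t (j+1))])]

lemma extChain_hle (hs : Λ.s lam = t.seg 0 0) (j : ℕ) (i : Fin k) :
    ((Λ.d (extChain t lam j) i : ℕ∞)) ≤ (Λ.d lam i : ℕ∞) + t.deg i := by
  rw [extChain_d hs j]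
  simp only [Pi.add_apply, Nat.cast_add]
  exact add_le_add_right (trunc_coe_le t j i) _

lemma extChain_hex (hs : Λ.s lam = t.seg 0 0) (q : Fin k → ℕ)
    (hq : ∀ i, ((q i : ℕ∞)) ≤ (Λ.d lam i : ℕ∞) + t.deg i) :
    ∃ j, q ≤ Λ.d (extChain t lam j) := by
  classical
  set J : ℕ := Finset.univ.sup q with hJ
  refine ⟨J, ?_⟩
  intro i
  rw [extChain_d hs]
  simp only [Pi.add_apply]
  have hqi : q i ≤ J := Finset.le_sup (Finset.mem_univ i)
  rcases eq_or_ne (t.deg i) ⊤ with htop|htop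
  · have hJe : trunc t J i = J := by
      rw [trunc, emin_eq_of_le]
      rw [htop]; exact le_top
    omega
  · set T := (t.deg i).toNat with hT
    have hTc : (T : ℕ∞) = t.deg i := ENat.coe_toNat htop
    have h1 : q i ≤ Λ.d lam i + T := by
      have h2 := hq i
      rw [← hTc] at h2
      exact_mod_cast h2
    have h2 : trunc t J i = min J T := by
      rw [trunc, emin, ← hTc]
      rcases le_total J T with h|h
      · rw [min_eq_left (by exact_mod_cast h)]
        simp [Nat.min_eq_left h]
      · rw [min_eq_right (by exact_mod_cast h)]
        simp [Nat.min_eq_right h]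
    omega

/-- the vertex of `lam ⋅ t` at position `P ≥ d lam`. -/
lemma extChain_vertex (hs : Λ.s lam = t.seg 0 0) (P : Fin k → ℕ)
    (hdP : Λ.d lam ≤ P)
    (hP : ∀ i, ((P i : ℕ∞)) ≤ (Λ.d lam i : ℕ∞) + t.deg i) :
    chainSeg Λ (extChain t lam) P P =
      t.seg (P - Λ.d lam) (P - Λ.d lam) := by
  obtain ⟨j, hj⟩ := extChain_hex hs P hP
  rw [chainSeg_eq (extChain_isChain hs) le_rfl hj, Λ.mid_self]
  set c' : Fin k → ℕ := P - Λ.d lam with hc'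
  have hc'le : c' ≤ trunc t j := by
    intro i
    have := hj i
    rw [extChain_d hs] at this
    simp only [Pi.add_apply] at this
    simp only [hc', Pi.sub_apply]
    omega
  have hc'deg : ∀ i, ((c' i : ℕ∞)) ≤ t.deg i :=
    fun i => le_trans (by exact_mod_cast hc'le i) (trunc_coe_le t j i)
  have hr1 : Λ.s (t.seg 0 c') = Λ.r (t.seg c' (trunc t j)) := by
    rw [t.seg_s 0 c' (fun i => Nat.zero_le _) hc'deg,
      t.seg_r c' (trunc t j) hc'le (trunc_le_all t j)]
  have hsplit : (Λ.split (extChain t lam j) P hj).1 =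
      Λ.comp lam (t.seg 0 c') := by
    have hw : extChain t lam j = Λ.comp (Λ.comp lam (t.seg 0 c'))
        (t.seg c' (trunc t j)) := by
      rw [extChain,
        ← t.seg_comp 0 c' (trunc t j) (fun i => Nat.zero_le _) hc'le
          (trunc_le_all t j),
        Λ.comp_assoc lam _ _ (ext_hslam hs _ hc'deg) hr1]
    have hd : Λ.d (Λ.comp lam (t.seg 0 c')) = P := by
      rw [Λ.d_comp _ _ (ext_hslam hs _ hc'deg),
        t.seg_d 0 c' (fun i => Nat.zero_le _) hc'deg]
      funext i
      have h9 : Λ.d lam i ≤ P i := hdP i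
      simp only [Pi.add_apply, Pi.sub_apply, Pi.zero_apply, hc']
      omega
    have hsv : Λ.s (Λ.comp lam (t.seg 0 c')) = Λ.r (t.seg c' (trunc t j)) := by
      rw [Λ.s_comp _ _ (ext_hslam hs _ hc'deg)]; exact hr1
    have := Λ.split_unique (extChain t lam j) P hj hd hsv hw
    rw [this]
  rw [hsplit, Λ.s_comp _ _ (ext_hslam hs _ hc'deg),
    t.seg_s 0 c' (fun i => Nat.zero_le _) hc'deg]

lemma extChain_vertex0 (hs : Λ.s lam = t.seg 0 0) :
    chainSeg Λ (extChain t lam) 0 0 = Λ.r lam := by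
  have h0 : (0 : Fin k → ℕ) ≤ Λ.d (extChain t lam 0) := fun i => Nat.zero_le _
  rw [chainSeg_eq (extChain_isChain hs) le_rfl h0, Λ.mid_zero_self, extChain,
    Λ.r_comp _ _ (ext_hslam hs _ (trunc_le_all t 0))]

/-- boundary property of `lam ⋅ t` (uses local convexity) -/
lemma extChain_bnd (hlc : Λ.LocallyConvex) (hs : Λ.s lam = t.seg 0 0)
    (p : Fin k → ℕ) (hp : ∀ i, ((p i : ℕ∞)) ≤ (Λ.d lam i : ℕ∞) + t.deg i)
    (i : Fin k) (hpi : ((p i : ℕ∞)) = (Λ.d lam i : ℕ∞) + t.deg i)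
    (e : Λ.Path) (hre : Λ.r e = chainSeg Λ (extChain t lam) p p) :
    Λ.d e ≠ Pi.single i 1 := by
  intro hde
  have htop : t.deg i ≠ ⊤ := by
    intro hcon
    rw [hcon] at hpi
    simp at hpi
  set T := (t.deg i).toNat with hT
  have hTc : (T : ℕ∞) = t.deg i := ENat.coe_toNat htop
  have hpiT : p i = Λ.d lam i + T := by
    rw [← hTc] at hpi
    exact_mod_cast hpi
  -- P := p ⊔ d lam
  set P : Fin k → ℕ := fun i' => max (p i') (Λ.d lam i') with hPdef
  have hpP : p ≤ P := fun i' => le_max_left _ _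
  have hdP : Λ.d lam ≤ P := fun i' => le_max_right _ _
  have hP : ∀ i', ((P i' : ℕ∞)) ≤ (Λ.d lam i' : ℕ∞) + t.deg i' := by
    intro i'
    rcases max_cases (p i') (Λ.d lam i') with ⟨hmax, _⟩|⟨hmax, _⟩
    · rw [hPdef]; simp only []; rw [hmax]; exact hp i'
    · rw [hPdef]; simp only []; rw [hmax]
      exact le_add_of_le_of_nonneg le_rfl zero_le
  obtain ⟨j, hj⟩ := extChain_hex hs P hP
  have hpj : p ≤ Λ.d (extChain t lam j) := le_trans hpP hj
  set ρ := Λ.mid (extChain t lam j) p P hpP hj with hρ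
  have hdρ : Λ.d ρ i = 0 := by
    rw [hρ, Λ.mid_d]
    simp only [Pi.sub_apply, hPdef]
    omega
  have hrρ : Λ.r ρ = chainSeg Λ (extChain t lam) p p := by
    rw [hρ, Λ.mid_r _ _ _ _ _ hpj,
      ← chainSeg_eq (extChain_isChain hs) le_rfl hpj]
  obtain ⟨e', hre', hde'⟩ := Λ.prop_fwd hlc ρ i hdρ
    ⟨e, by rw [hre, ← hrρ], hde⟩
  have hsρ : Λ.s ρ = t.seg (P - Λ.d lam) (P - Λ.d lam) := by
    rw [hρ, Λ.mid_s, ← chainSeg_eq (extChain_isChain hs) le_rfl hj]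
    exact extChain_vertex hs P hdP hP
  -- boundary property of t at P - d lam
  have hc'deg : ∀ i', (((P - Λ.d lam : Fin k → ℕ) i' : ℕ∞)) ≤ t.deg i' := by
    intro i'
    have h1 := hp i'
    simp only [Pi.sub_apply, hPdef]
    rcases eq_or_ne (t.deg i') ⊤ with htop'|htop'
    · rw [htop']; exact le_top
    · set T' := (t.deg i').toNat with hT'
      have hTc' : (T' : ℕ∞) = t.deg i' := ENat.coe_toNat htop'
      rw [← hTc'] at h1 ⊢
      have : p i' ≤ Λ.d lam i' + T' := by exact_mod_cast h1
      exact_mod_cast (by omega : max (p i') (Λ.d lam i') - Λ.d lam i' ≤ T')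
  have hc'i : (((P - Λ.d lam : Fin k → ℕ) i : ℕ∞)) = t.deg i := by
    simp only [Pi.sub_apply, hPdef]
    rw [← hTc]
    have : max (p i) (Λ.d lam i) - Λ.d lam i = T := by omega
    rw [this]
  exact t.boundary (P - Λ.d lam) hc'deg i hc'i e' (by rw [hre', hsρ]) hde'

/-- The extension `lam ⋅ t` of a boundary path `t` by a path `lam` with
`s lam = t(0)`. -/
noncomputable def extendBP (hlc : Λ.LocallyConvex) (hs : Λ.s lam = t.seg 0 0) :
    BoundaryPath Λ :=
  chainBP (extChain_isChain hs) (fun i => (Λ.d lam i : ℕ∞) + t.deg i)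
    (fun j i => extChain_hle hs j i) (fun q hq => extChain_hex hs q hq)
    (fun p hp i hpi e hre => extChain_bnd hlc hs p hp i hpi e hre)

lemma extendBP_deg (hlc : Λ.LocallyConvex) (hs : Λ.s lam = t.seg 0 0) (i : Fin k) :
    (extendBP hlc hs).deg i = (Λ.d lam i : ℕ∞) + t.deg i := rfl

lemma extendBP_seg00 (hlc : Λ.LocallyConvex) (hs : Λ.s lam = t.seg 0 0) :
    (extendBP hlc hs).seg 0 0 = Λ.r lam := extChain_vertex0 hs

lemma extendBP_vertex (hlc : Λ.LocallyConvex) (hs : Λ.s lam = t.seg 0 0)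
    (P : Fin k → ℕ) (hdP : Λ.d lam ≤ P)
    (hP : ∀ i, ((P i : ℕ∞)) ≤ (Λ.d lam i : ℕ∞) + t.deg i) :
    (extendBP hlc hs).seg P P = t.seg (P - Λ.d lam) (P - Λ.d lam) :=
  extChain_vertex hs P hdP hP

end Extend

end KGraph
namespace KGraph

variable {k : ℕ} {Λ : KGraph k}

section Greedy

variable (Λ)

lemma isVertex_s (w : Λ.Path) : Λ.IsVertex (Λ.s w) := Λ.r_s w

noncomputable def nxt (w : Λ.Path) : Λ.Path :=
  (Λ.exists_le_path (fun _ => 1) (Λ.s w) (Λ.isVertex_s w)).choose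

lemma nxt_spec (w : Λ.Path) :
    Λ.r (Λ.nxt w) = Λ.s w ∧ Λ.nxt w ∈ Λ.boundedPaths (fun _ => 1) :=
  (Λ.exists_le_path (fun _ => 1) (Λ.s w) (Λ.isVertex_s w)).choose_spec

noncomputable def greedy (v : Λ.Path) : ℕ → Λ.Path
  | 0 => v
  | j + 1 => Λ.comp (greedy v j) (Λ.nxt (greedy v j))

lemma greedy_succ (v : Λ.Path) (j : ℕ) :
    Λ.greedy v (j+1) = Λ.comp (Λ.greedy v j) (Λ.nxt (Λ.greedy v j)) := rfl

lemma greedy_isChain (v : Λ.Path) : IsChain Λ (Λ.greedy v) := by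
  intro j
  exact ⟨Λ.nxt (Λ.greedy v j), (Λ.nxt_spec (Λ.greedy v j)).1.symm,
    Λ.greedy_succ v j⟩

noncomputable def greedyDeg (v : Λ.Path) : Fin k → ℕ∞ :=
  fun i => ⨆ j, (Λ.d (Λ.greedy v j) i : ℕ∞)

lemma greedy_hle (v : Λ.Path) (j : ℕ) (i : Fin k) :
    (Λ.d (Λ.greedy v j) i : ℕ∞) ≤ Λ.greedyDeg v i :=
  le_iSup (fun j => ((Λ.d (Λ.greedy v j) i : ℕ∞))) j

lemma greedy_hex (v : Λ.Path) (q : Fin k → ℕ)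
    (hq : ∀ i, (q i : ℕ∞) ≤ Λ.greedyDeg v i) :
    ∃ j, q ≤ Λ.d (Λ.greedy v j) := by
  classical
  have hex : ∀ i, ∃ j, q i ≤ Λ.d (Λ.greedy v j) i := by
    intro i
    by_contra hcon
    push_neg at hcon
    have hq0 : 1 ≤ q i := by
      have := hcon 0; omega
    have hub : Λ.greedyDeg v i ≤ ((q i - 1 : ℕ) : ℕ∞) := by
      apply iSup_le
      intro j
      have := hcon j
      exact_mod_cast (by omega : Λ.d (Λ.greedy v j) i ≤ q i - 1)
    have := le_trans (hq i) hub
    have : q i ≤ q i - 1 := by exact_mod_cast this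
    omega
  refine ⟨Finset.univ.sup (fun i => (hex i).choose), fun i => ?_⟩
  exact le_trans (hex i).choose_spec
    ((Λ.greedy_isChain v).d_mono
      (Finset.le_sup (f := fun i => (hex i).choose) (Finset.mem_univ i)) i)

lemma greedy_bnd (hlc : Λ.LocallyConvex) (v : Λ.Path)
    (p : Fin k → ℕ) (hp : ∀ i, (p i : ℕ∞) ≤ Λ.greedyDeg v i)
    (i : Fin k) (hpi : (p i : ℕ∞) = Λ.greedyDeg v i)
    (e : Λ.Path) (hre : Λ.r e = chainSeg Λ (Λ.greedy v) p p) :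
    Λ.d e ≠ Pi.single i 1 := by
  intro hde
  obtain ⟨j0, hj0⟩ := Λ.greedy_hex v p hp
  have hub : ∀ j, Λ.d (Λ.greedy v j) i ≤ p i := by
    intro j
    have h1 := Λ.greedy_hle v j i
    rw [← hpi] at h1
    exact_mod_cast h1
  set J := j0 + 1 with hJ
  have hpJ : p ≤ Λ.d (Λ.greedy v J) :=
    le_trans hj0 ((Λ.greedy_isChain v).d_mono (show j0 ≤ J by omega))
  have heqj0 : Λ.d (Λ.greedy v j0) i = p i :=
    le_antisymm (hub j0) (hj0 i)
  have heqJ : Λ.d (Λ.greedy v J) i = p i :=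
    le_antisymm (hub J) (hpJ i)
  -- the step path has zero degree in direction i
  have hstep : Λ.d (Λ.nxt (Λ.greedy v j0)) i = 0 := by
    have hd : Λ.d (Λ.greedy v J) = Λ.d (Λ.greedy v j0) +
        Λ.d (Λ.nxt (Λ.greedy v j0)) := by
      rw [hJ, Λ.greedy_succ, Λ.d_comp _ _ (Λ.nxt_spec (Λ.greedy v j0)).1.symm]
    have := congrFun hd i
    simp only [Pi.add_apply] at this
    omega
  -- hence s (greedy v J) has no e_i edge
  have hnoe : ∀ e', Λ.r e' = Λ.s (Λ.greedy v J) → Λ.d e' ≠ Pi.single i 1 := by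
    intro e' hre' hde'
    have hsJ : Λ.s (Λ.greedy v J) = Λ.s (Λ.nxt (Λ.greedy v j0)) := by
      rw [hJ, Λ.greedy_succ, Λ.s_comp _ _ (Λ.nxt_spec (Λ.greedy v j0)).1.symm]
    have hmem := (Λ.nxt_spec (Λ.greedy v j0)).2
    rw [boundedPaths, Set.mem_setOf_eq] at hmem
    have hb := hmem.2 i (show Λ.d (Λ.nxt (Λ.greedy v j0)) i < 1 by omega) e'
      (by rw [hre', hsJ])
    exact hb hde'
  -- connecting path from vertex p to s (greedy v J)
  set ρ := Λ.mid (Λ.greedy v J) p (Λ.d (Λ.greedy v J)) hpJ le_rfl with hρ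
  have hdρ : Λ.d ρ i = 0 := by
    rw [hρ, Λ.mid_d]
    simp only [Pi.sub_apply]
    omega
  have hrρ : Λ.r ρ = chainSeg Λ (Λ.greedy v) p p := by
    rw [hρ, Λ.mid_r _ _ _ _ _ hpJ,
      ← chainSeg_eq (Λ.greedy_isChain v) le_rfl hpJ]
  have hsρ : Λ.s ρ = Λ.s (Λ.greedy v J) := by
    rw [hρ, Λ.mid_s, Λ.mid_full_self]
  obtain ⟨e', hre', hde'⟩ := Λ.prop_fwd hlc ρ i hdρ ⟨e, by rw [hre, ← hrρ], hde⟩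
  exact hnoe e' (by rw [hre', hsρ]) hde'

/-- A boundary path based at an arbitrary vertex `v`. -/
noncomputable def greedyBP (hlc : Λ.LocallyConvex) (v : Λ.Path) :
    BoundaryPath Λ :=
  chainBP (Λ.greedy_isChain v) (Λ.greedyDeg v) (Λ.greedy_hle v)
    (Λ.greedy_hex v) (Λ.greedy_bnd hlc v)

lemma greedyBP_seg00 (hlc : Λ.LocallyConvex) (v : Λ.Path)
    (hv : Λ.IsVertex v) : (Λ.greedyBP hlc v).seg 0 0 = v := by
  have h0 : (0 : Fin k → ℕ) ≤ Λ.d (Λ.greedy v 0) := fun i => Nat.zero_le _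
  have : (Λ.greedyBP hlc v).seg 0 0 = chainSeg Λ (Λ.greedy v) 0 0 := rfl
  rw [this, chainSeg_eq (Λ.greedy_isChain v) le_rfl h0, Λ.mid_zero_self]
  exact hv

end Greedy

end KGraph
/-- Lemma 4.3: Let `Λ` be a locally convex row-finite
`k`-graph with desourcification `Λ̄`, and `x ∈ Λ^{≤∞}`.  Then `x` is cofinal
in `Λ` iff the infinite path `[x;(0,∞)]` is cofinal in `Λ̄`. -/
theorem statement9 {k : ℕ} (Λ : KGraph k) (hlc : Λ.LocallyConvex)
    (hrf : Λ.RowFinite) (D : Desourcification Λ) (x : BoundaryPath Λ)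
    (z : BoundaryPath D.bar) (hz : IsInfClass D x 0 z) :
    Λ.CofinalBP x ↔ D.bar.CofinalBP z := by
  obtain ⟨hz1, hz2⟩ := hz
  constructor
  · -- forward direction
    intro hx w hw
    obtain ⟨y, m, hwrep⟩ := D.cls_surjective w
    have hdw : D.bar.d w = 0 := by
      have := D.bar.d_r w; rwa [hw] at this
    rw [hdw, add_zero] at hwrep
    set a : Fin k → ℕ := emin m y.deg with ha
    have ham : ∀ i, a i ≤ m i := fun i => emin_le m y.deg i
    have hay : ∀ i, (a i : ℕ∞) ≤ y.deg i := fun i => emin_coe_le m y.deg i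
    set v : Λ.Path := y.seg a a with hvdef
    have hv : Λ.IsVertex v := y.seg_r a a le_rfl hay
    obtain ⟨n, hn, μ, hrμ, hsμ⟩ := hx v hv
    -- phantom coordinate analysis
    have hkey : ∀ i, ¬((m i : ℕ∞) ≤ y.deg i) →
        Λ.d μ i = 0 ∧ (n i : ℕ∞) = x.deg i := by
      intro i hi
      push_neg at hi
      have hai : (a i : ℕ∞) = y.deg i := by
        rw [ha, emin_coe, min_eq_right hi.le]
      have hnoe : ∀ e, Λ.r e = v → Λ.d e ≠ Pi.single i 1 :=
        y.boundary a hay i hai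
      constructor
      · by_contra hdmu
        obtain ⟨e, hre, hde⟩ :=
          Λ.exists_edge_of_d_pos μ i (Nat.pos_of_ne_zero hdmu)
        exact hnoe e (by rw [hre, hrμ]) hde
      · by_contra hne
        have hlt : (n i : ℕ∞) < x.deg i := lt_of_le_of_ne (hn i) hne
        have hn1 : ∀ i' : Fin k, (((n + Pi.single i 1 : Fin k → ℕ) i' : ℕ) : ℕ∞) ≤ x.deg i' := by
          intro i'
          simp only [Pi.add_apply]
          by_cases hii : i' = i
          · subst hii
            simp only [Pi.single_eq_same, Nat.cast_add, Nat.cast_one]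
            exact Order.add_one_le_of_lt hlt
          · simp only [Pi.single_eq_of_ne hii, add_zero, Nat.cast_add,
              Nat.cast_zero]
            exact hn i'
        have hnle : n ≤ n + Pi.single i 1 := fun i' => Nat.le_add_right _ _
        have hgr : Λ.r (x.seg n (n + Pi.single i 1)) = x.seg n n :=
          x.seg_r n (n + Pi.single i 1) hnle hn1
        have hgd : Λ.d (x.seg n (n + Pi.single i 1)) = Pi.single i 1 := by
          rw [x.seg_d n (n + Pi.single i 1) hnle hn1]
          funext i'
          simp only [Pi.sub_apply, Pi.add_apply]
          omega
        have hcompose : Λ.s μ = Λ.r (x.seg n (n + Pi.single i 1)) := by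
          rw [hgr, hsμ]
        have hdc : 0 < Λ.d (Λ.comp μ (x.seg n (n + Pi.single i 1))) i := by
          rw [Λ.d_comp _ _ hcompose]
          simp only [Pi.add_apply, hgd, Pi.single_eq_same]
          omega
        obtain ⟨e, hre, hde⟩ := Λ.exists_edge_of_d_pos _ i hdc
        exact hnoe e (by rw [hre, Λ.r_comp _ _ hcompose, hrμ]) hde
    -- the glued boundary path Z = μ ⋅ σⁿx
    set t : BoundaryPath Λ := KGraph.shiftBP x n hn with htdef
    have hts : t.seg 0 0 = x.seg n n := by
      rw [htdef, KGraph.shiftBP_seg, zero_add]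
    have hs : Λ.s μ = t.seg 0 0 := by rw [hts, hsμ]
    set Z : BoundaryPath Λ := KGraph.extendBP hlc hs with hZdef
    have hZdeg : ∀ i, Z.deg i = (Λ.d μ i : ℕ∞) + (x.deg i - (n i : ℕ∞)) := by
      intro i
      rw [hZdef, KGraph.extendBP_deg hlc hs i, htdef, KGraph.shiftBP_deg]
    set b : Fin k → ℕ := fun i => m i - a i with hb
    set N : Fin k → ℕ := fun i => n i + b i with hN
    have hb0 : ∀ i, ((m i : ℕ∞) ≤ y.deg i) → b i = 0 := by
      intro i hi
      have : a i = m i := emin_eq_of_le m y.deg i hi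
      simp [hb, this]
    have hZ0 : ∀ i, ¬((m i : ℕ∞) ≤ y.deg i) → Z.deg i = 0 := by
      intro i hi
      obtain ⟨hd0, hnx⟩ := hkey i hi
      rw [hZdeg i, hd0, ← hnx]
      simp
    have hemin1 : emin b Z.deg = 0 := by
      funext i
      by_cases hi : (m i : ℕ∞) ≤ y.deg i
      · have := emin_le b Z.deg i
        rw [hb0 i hi] at this
        simpa using this
      · have h1 := emin_coe_le b Z.deg i
        rw [hZ0 i hi] at h1
        have : (emin b Z.deg i : ℕ∞) = 0 := le_antisymm h1 zero_le
        exact_mod_cast this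
    have hemin2 : emin (b + Λ.d μ) Z.deg = Λ.d μ := by
      funext i
      by_cases hi : (m i : ℕ∞) ≤ y.deg i
      · have h1 : (((b + Λ.d μ) i : ℕ) : ℕ∞) ≤ Z.deg i := by
          simp only [Pi.add_apply, hb0 i hi, zero_add]
          rw [hZdeg i]
          exact le_self_add
        rw [emin_eq_of_le _ _ _ h1]
        simp [Pi.add_apply, hb0 i hi]
      · have h1 := emin_coe_le (b + Λ.d μ) Z.deg i
        rw [hZ0 i hi] at h1
        have h2 : (emin (b + Λ.d μ) Z.deg i : ℕ∞) = 0 :=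
          le_antisymm h1 zero_le
        have h3 : emin (b + Λ.d μ) Z.deg i = 0 := by exact_mod_cast h2
        rw [h3, (hkey i hi).1]
    have hemin3 : emin N x.deg = n := by
      funext i
      simp only [emin]
      by_cases hi : (m i : ℕ∞) ≤ y.deg i
      · have hNi : N i = n i := by simp [hN, hb0 i hi]
        rw [hNi, min_eq_left (hn i)]
        simp
      · have hnx := (hkey i hi).2
        have hge : (n i : ℕ∞) ≤ ((N i : ℕ) : ℕ∞) := by
          have h9 : n i ≤ N i := by simp [hN]
          exact_mod_cast h9
        rw [← hnx, min_eq_right hge]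
        simp
    have hZ00 : Z.seg 0 0 = v := by
      rw [hZdef, KGraph.extendBP_seg00, hrμ]
    have hZdμ : Z.seg (Λ.d μ) (Λ.d μ) = x.seg n n := by
      rw [hZdef, KGraph.extendBP_vertex hlc hs (Λ.d μ) le_rfl
        (fun i => le_self_add)]
      rw [show Λ.d μ - Λ.d μ = (0 : Fin k → ℕ) from by funext i; simp]
      exact hts
    have hble : b ≤ b + Λ.d μ := fun i => Nat.le_add_right _ _
    have hr : D.cls Z b b = D.cls y m m := by
      rw [D.cls_eq_iff Z b b y m m le_rfl le_rfl]
      refine ⟨?_, ?_, by funext i; simp⟩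
      · rw [hemin1, hZ00, ← ha]
      · rw [hemin1]
        funext i
        simp [hb, ha]
    have hso : D.cls Z (b + Λ.d μ) (b + Λ.d μ) = D.cls x N N := by
      rw [D.cls_eq_iff Z (b + Λ.d μ) (b + Λ.d μ) x N N le_rfl le_rfl]
      refine ⟨?_, ?_, by funext i; simp⟩
      · rw [hemin2, hemin3, hZdμ]
      · rw [hemin2, hemin3]
        funext i
        simp [hN]
    have hzNN : z.seg N N = D.cls x N N := by rw [hz2 N N le_rfl, zero_add]
    refine ⟨N, fun i => by rw [hz1 i]; exact le_top,
      D.cls Z b (b + Λ.d μ), ?_, ?_⟩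
    · rw [D.r_cls Z b (b + Λ.d μ) hble, hr, ← hwrep]
    · rw [D.s_cls Z b (b + Λ.d μ) hble, hso, hzNN]
  · -- backward direction
    intro hzc v hv
    set B : BoundaryPath Λ := Λ.greedyBP hlc v with hBdef
    have hB00 : B.seg 0 0 = v := Λ.greedyBP_seg00 hlc v hv
    have hdv : Λ.d v = 0 := by
      have := Λ.d_r v; rwa [hv] at this
    have hsvv : Λ.s v = v := by
      have := Λ.s_r v; rwa [hv] at this
    have hext : IsExtension Λ v B B := by
      refine ⟨fun i => ?_, ?_, fun p hp => ?_⟩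
      · rw [hdv]; simp
      · rw [hdv]; exact hB00
      · rw [hdv, zero_add]
    have hsv : B.seg 0 0 = Λ.s v := by rw [hB00, hsvv]
    have hemb : D.emb v = D.cls B 0 0 := by
      have := D.emb_cls v B B hsv hext
      rwa [hdv] at this
    have hwv : D.bar.IsVertex (D.emb v) := by
      have := D.emb_r v
      rw [hv] at this
      exact this.symm
    obtain ⟨N, hNd, ν, hνr, hνs⟩ := hzc (D.emb v) hwv
    obtain ⟨Y, m, hνrep⟩ := D.cls_surjective ν
    set M : Fin k → ℕ := m + D.bar.d ν with hM
    have hmM : m ≤ M := fun i => Nat.le_add_right _ _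
    have hr2 : D.cls Y m m = D.emb v := by
      rw [← D.r_cls Y m M hmM, ← hνrep, hνr]
    have hzNN : z.seg N N = D.cls x N N := by rw [hz2 N N le_rfl, zero_add]
    have hs2 : D.cls Y M M = D.cls x N N := by
      rw [← D.s_cls Y m M hmM, ← hνrep, hνs, hzNN]
    obtain ⟨h1a, h1b, -⟩ :=
      (D.cls_eq_iff Y m m B 0 0 le_rfl le_rfl).mp (hr2.trans hemb)
    obtain ⟨h2a, h2b, -⟩ :=
      (D.cls_eq_iff Y M M x N N le_rfl le_rfl).mp hs2
    have hm : emin m Y.deg = m := by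
      funext i
      have h3 := congrFun h1b i
      rw [emin_zero] at h3
      simp only [Pi.sub_apply, Pi.zero_apply] at h3
      have h4 := emin_le m Y.deg i
      omega
    have hmY : ∀ i, (m i : ℕ∞) ≤ Y.deg i :=
      fun i => emin_eq_iff_le m Y.deg i (congrFun hm i)
    have hYv : Y.seg m m = v := by
      rw [← hm]
      rw [h1a, emin_zero, hB00]
    have hEY : ∀ i, (emin M Y.deg i : ℕ∞) ≤ Y.deg i :=
      fun i => emin_coe_le M Y.deg i
    have hmE : m ≤ emin M Y.deg := by
      intro i
      have h3 : (m i : ℕ∞) ≤ min ((M i : ℕ) : ℕ∞) (Y.deg i) :=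
        le_min (by exact_mod_cast hmM i) (hmY i)
      rw [← emin_coe M Y.deg i] at h3
      exact_mod_cast h3
    refine ⟨emin N x.deg, fun i => emin_coe_le N x.deg i, Y.seg m (emin M Y.deg),
      ?_, ?_⟩
    · rw [Y.seg_r m (emin M Y.deg) hmE hEY, hYv]
    · rw [Y.seg_s m (emin M Y.deg) hmE hEY, h2a]
end

section
/- Let Λ be a locally convex row-finite k-graph. The following two conditions are equivalent: (2) there exist nonempty, disjoint saturated hereditary subsets H₁, H₂ ⊆ Λ^0 such that for every v ∈ Λ^0 \ (H₁ ∪ H₂) there is some n ∈ ℕ^k with s(vΛ^{≤n}) ⊆ H₁ ∪ H₂; (3) there exists a nonempty saturated hereditary subset H ⊆ Λ^0 such that Λ^0 ≻ H. -/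
namespace KGraph

variable {k : ℕ} (Λ : KGraph k)

lemma s_vertex {v : Λ.Path} (hv : Λ.IsVertex v) : Λ.s v = v := by
  conv_lhs => rw [← hv]
  rw [Λ.s_r, hv]

lemma eq_r_of_d_eq_zero {μ : Λ.Path} (h : Λ.d μ = 0) : μ = Λ.r μ := by
  obtain ⟨p, hp, hu⟩ := Λ.factorization μ 0 0 (by simp [h])
  have h1 : (Λ.r μ, μ) = p :=
    hu (Λ.r μ, μ) ⟨Λ.d_r μ, h, Λ.s_r μ, (Λ.id_comp μ).symm⟩
  have h2 : (μ, Λ.s μ) = p :=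
    hu (μ, Λ.s μ) ⟨h, Λ.d_s μ, (Λ.r_s μ).symm, (Λ.comp_id μ).symm⟩
  have := h1.trans h2.symm
  exact (congrArg Prod.fst this).symm

lemma single_le {i : Fin k} {m : Fin k → ℕ} (h : 0 < m i) : Pi.single i 1 ≤ m := by
  refine Pi.le_def.mpr fun l => ?_
  by_cases hl : l = i
  · subst hl; rw [Pi.single_eq_same]; omega
  · rw [Pi.single_eq_of_ne hl]; omega

lemma factor {μ : Λ.Path} (m : Fin k → ℕ) (hm : m ≤ Λ.d μ) :
    ∃ μ₁ μ₂ : Λ.Path, Λ.d μ₁ = m ∧ Λ.d μ₂ = Λ.d μ - m ∧ Λ.s μ₁ = Λ.r μ₂ ∧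
      Λ.r μ₁ = Λ.r μ ∧ Λ.s μ₂ = Λ.s μ ∧ μ = Λ.comp μ₁ μ₂ := by
  obtain ⟨⟨μ₁, μ₂⟩, ⟨hd1, hd2, hsr, hc⟩, -⟩ := Λ.factorization μ m (Λ.d μ - m)
    (funext fun i => by
      have := Pi.le_def.mp hm i
      simp only [Pi.add_apply, Pi.sub_apply]
      omega)
  refine ⟨μ₁, μ₂, hd1, hd2, hsr, ?_, ?_, hc⟩
  · rw [hc, Λ.r_comp _ _ hsr]
  · rw [hc, Λ.s_comp _ _ hsr]

lemma edge_pullback {ν : Λ.Path} {i : Fin k} (hν : Λ.d ν i = 0)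
    {f : Λ.Path} (hrf : Λ.r f = Λ.s ν) (hdf : Λ.d f = Pi.single i 1) :
    ∃ e, Λ.r e = Λ.r ν ∧ Λ.d e = Pi.single i 1 := by
  have hsr : Λ.s ν = Λ.r f := hrf.symm
  have hdμ : Λ.d (Λ.comp ν f) = Λ.d ν + Pi.single i 1 := by
    rw [Λ.d_comp _ _ hsr, hdf]
  have hle : Pi.single i 1 ≤ Λ.d (Λ.comp ν f) := by
    rw [hdμ]
    refine Pi.le_def.mpr fun l => ?_
    simp only [Pi.add_apply]
    by_cases hl : l = i
    · subst hl; rw [Pi.single_eq_same]; omega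
    · rw [Pi.single_eq_of_ne hl]; omega
  obtain ⟨μ₁, μ₂, hd1, _, _, hr1, _, _⟩ :=
    Λ.factor (μ := Λ.comp ν f) (Pi.single i 1) hle
  exact ⟨μ₁, by rw [hr1, Λ.r_comp _ _ hsr], hd1⟩

lemma edge_push (hlc : Λ.LocallyConvex) :
    ∀ N : ℕ, ∀ μ : Λ.Path, Finset.univ.sum (Λ.d μ) = N → ∀ i : Fin k, Λ.d μ i = 0 →
    ∀ e, Λ.r e = Λ.r μ → Λ.d e = Pi.single i 1 →
    ∃ f, Λ.r f = Λ.s μ ∧ Λ.d f = Pi.single i 1 := by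
  intro N
  induction N using Nat.strong_induction_on with
  | _ N IH =>
    intro μ hN i hi e hre hde
    by_cases h0 : Λ.d μ = 0
    · refine ⟨e, ?_, hde⟩
      rw [hre]
      conv_rhs => rw [Λ.eq_r_of_d_eq_zero h0]
      rw [Λ.s_r]
    · have hj : ∃ j, Λ.d μ j ≠ 0 := by
        by_contra h; push_neg at h; exact h0 (funext fun j => h j)
      obtain ⟨j, hjne⟩ := hj
      have hji : j ≠ i := fun h => hjne (h ▸ hi)
      obtain ⟨μ₁, μ₂, hd1, hd2, hsr, hr1, hs2, hcomp⟩ :=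
        Λ.factor (μ := μ) (Pi.single j 1) (single_le (Nat.pos_of_ne_zero hjne))
      obtain ⟨e', hre', hde'⟩ := hlc j i hji μ₁ e (by rw [hr1, hre]) hd1 hde
      have hd2i : Λ.d μ₂ i = 0 := by
        rw [hd2]
        simp only [Pi.sub_apply, Pi.single_eq_of_ne (Ne.symm hji), hi]
        omega
      have hsum : Finset.univ.sum (Λ.d μ₂) < N := by
        rw [← hN]
        refine Finset.sum_lt_sum (fun l _ => ?_) ⟨j, Finset.mem_univ j, ?_⟩
        · rw [hd2]; simp only [Pi.sub_apply]; omega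
        · rw [hd2]; simp only [Pi.sub_apply, Pi.single_eq_same]; omega
      obtain ⟨f, hf1, hf2⟩ := IH _ hsum μ₂ rfl i hd2i e' (by rw [hre', hsr]) hde'
      exact ⟨f, by rw [hf1, hs2], hf2⟩

lemma key (hlc : Λ.LocallyConvex) {H : Set Λ.Path} (hH : Λ.Hereditary H) :
    ∀ N : ℕ, ∀ n : Fin k → ℕ, Finset.univ.sum n = N →
    ∀ μ : Λ.Path, Λ.s μ ∈ H →
    ∃ lam ∈ Λ.boundedPaths n, Λ.r lam = Λ.r μ ∧ (Λ.tree (Λ.s lam) ∩ H).Nonempty := by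
  intro N
  induction N using Nat.strong_induction_on with
  | _ N IH =>
    intro n hN μ hμH
    by_cases hn : ∃ i, 0 < n i
    · obtain ⟨i, hni⟩ := hn
      by_cases hedge : ∃ e, Λ.r e = Λ.r μ ∧ Λ.d e = Pi.single i 1
      · obtain ⟨μ', hrμ', hsμ', hdi⟩ :
            ∃ μ' : Λ.Path, Λ.r μ' = Λ.r μ ∧ Λ.s μ' ∈ H ∧ 0 < Λ.d μ' i := by
          by_cases hdμi : 0 < Λ.d μ i
          · exact ⟨μ, rfl, hμH, hdμi⟩
          · obtain ⟨e, hre, hde⟩ := hedge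
            obtain ⟨f, hrf, hdf⟩ := Λ.edge_push hlc _ μ rfl i (by omega) e hre hde
            refine ⟨Λ.comp μ f, ?_, ?_, ?_⟩
            · rw [Λ.r_comp _ _ hrf.symm]
            · rw [Λ.s_comp _ _ hrf.symm]
              exact hH f (by rw [hrf]; exact hμH)
            · rw [Λ.d_comp _ _ hrf.symm]
              simp only [Pi.add_apply, hdf, Pi.single_eq_same]
              omega
        obtain ⟨μ₁, μ₂, hd1, hd2, hsr, hr1, hs2, hcomp⟩ :=
          Λ.factor (μ := μ') (Pi.single i 1) (single_le hdi)
        have hsum : Finset.univ.sum (n - Pi.single i 1) < N := by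
          rw [← hN]
          refine Finset.sum_lt_sum (fun l _ => ?_) ⟨i, Finset.mem_univ i, ?_⟩
          · simp only [Pi.sub_apply]; omega
          · simp only [Pi.sub_apply, Pi.single_eq_same]; omega
        obtain ⟨lam', hbp', hr', htree'⟩ :=
          IH _ hsum (n - Pi.single i 1) rfl μ₂ (by rw [hs2]; exact hsμ')
        have hsrlam : Λ.s μ₁ = Λ.r lam' := by rw [hsr, hr']
        refine ⟨Λ.comp μ₁ lam', ⟨?_, ?_⟩, ?_, ?_⟩
        · refine Pi.le_def.mpr fun l => ?_
          have h1 := Pi.le_def.mp hbp'.1 l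
          simp only [Pi.sub_apply] at h1
          rw [Λ.d_comp _ _ hsrlam, hd1]
          simp only [Pi.add_apply]
          by_cases hl : l = i
          · subst hl; rw [Pi.single_eq_same] at h1 ⊢; omega
          · rw [Pi.single_eq_of_ne hl] at h1 ⊢; omega
        · intro l hl f hrf hdf
          rw [Λ.d_comp _ _ hsrlam, hd1] at hl
          rw [Λ.s_comp _ _ hsrlam] at hrf
          refine hbp'.2 l ?_ f hrf hdf
          simp only [Pi.add_apply] at hl
          simp only [Pi.sub_apply]
          by_cases hli : l = i
          · subst hli; rw [Pi.single_eq_same] at hl ⊢; omega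
          · rw [Pi.single_eq_of_ne hli] at hl ⊢; omega
        · rw [Λ.r_comp _ _ hsrlam, hr1, hrμ']
        · rw [Λ.s_comp _ _ hsrlam]
          exact htree'
      · have hd0 : Λ.d μ i = 0 := by
          by_contra h
          obtain ⟨μ₁, _, hd1, _, _, hr1, _, _⟩ :=
            Λ.factor (μ := μ) (Pi.single i 1) (single_le (Nat.pos_of_ne_zero h))
          exact hedge ⟨μ₁, hr1, hd1⟩
        set n' : Fin k → ℕ := fun l => if l = i then 0 else n l with hn'
        have hn'i : n' i = 0 := by simp [hn']
        have hn'ne : ∀ l, l ≠ i → n' l = n l := fun l hl => by simp [hn', hl]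
        have hsum : Finset.univ.sum n' < N := by
          rw [← hN]
          refine Finset.sum_lt_sum (fun l _ => ?_) ⟨i, Finset.mem_univ i, ?_⟩
          · by_cases hl : l = i <;> simp [hn', hl]
          · simpa [hn'] using hni
        obtain ⟨lam, hbp, hr, htree⟩ := IH _ hsum n' rfl μ hμH
        refine ⟨lam, ⟨?_, ?_⟩, hr, htree⟩
        · refine Pi.le_def.mpr fun l => ?_
          have h1 := Pi.le_def.mp hbp.1 l
          by_cases hl : l = i
          · have h2 : n' l = 0 := by rw [hl]; exact hn'i
            omega
          · rw [hn'ne l hl] at h1; exact h1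
        · intro l hl f hrf hdf
          by_cases hli : l = i
          · have hdl : Λ.d lam l = 0 := by
              have h1 := Pi.le_def.mp hbp.1 l
              have h2 : n' l = 0 := by rw [hli]; exact hn'i
              omega
            obtain ⟨e, hre, hde⟩ := Λ.edge_pullback hdl hrf hdf
            exact hedge ⟨e, by rw [hre, hr], hli ▸ hde⟩
          · refine hbp.2 l ?_ f hrf hdf
            rw [hn'ne l hli]
            exact hl
    · push_neg at hn
      have hn0 : n = 0 := funext fun i => by have := hn i; simp only [Pi.zero_apply]; omega
      subst hn0
      refine ⟨Λ.r μ, ⟨?_, ?_⟩, Λ.r_r μ, ?_⟩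
      · rw [Λ.d_r]
      · intro i hi
        rw [Λ.d_r] at hi
        simp at hi
      · rw [Λ.s_r]
        exact ⟨Λ.s μ, ⟨μ, rfl, rfl⟩, hμH⟩

lemma delta_hereditary {H : Set Λ.Path} :
    Λ.Hereditary (Λ.Delta {v | Λ.IsVertex v} H) := by
  rintro lam ⟨hv, htree⟩
  refine ⟨Λ.r_s lam, ?_⟩
  rw [Set.eq_empty_iff_forall_notMem] at htree ⊢
  rintro w ⟨⟨μ, hrμ, hsμ⟩, hwH⟩
  exact htree w ⟨⟨Λ.comp lam μ, Λ.r_comp _ _ hrμ.symm,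
    by rw [Λ.s_comp _ _ hrμ.symm, hsμ]⟩, hwH⟩

lemma delta_disjoint {H : Set Λ.Path} :
    Disjoint (Λ.Delta {v | Λ.IsVertex v} H) H := by
  rw [Set.disjoint_left]
  rintro v ⟨hv, htree⟩ hvH
  rw [Set.eq_empty_iff_forall_notMem] at htree
  exact htree v ⟨⟨v, hv, Λ.s_vertex hv⟩, hvH⟩

lemma delta_saturated (hlc : Λ.LocallyConvex) {H : Set Λ.Path}
    (hH : Λ.Hereditary H) : Λ.Saturated (Λ.Delta {v | Λ.IsVertex v} H) := by
  rintro v hv ⟨n, hn⟩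
  refine ⟨hv, ?_⟩
  by_contra hne
  obtain ⟨w, ⟨μ, hrμ, hsμ⟩, hwH⟩ := Set.nonempty_iff_ne_empty.mpr hne
  obtain ⟨lam, hbp, hrlam, htree⟩ :=
    Λ.key hlc hH _ n rfl μ (by rw [hsμ]; exact hwH)
  have hmem := hn lam hbp (by rw [hrlam, hrμ])
  exact htree.ne_empty hmem.2

end KGraph

/-- Theorem 6.6, (2) ⇔ (3): For a locally convex row-finite
`k`-graph `Λ`, the following are equivalent:
(2) there exist nonempty disjoint saturated hereditary `H₁, H₂ ⊆ Λ^0` such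
that every `v ∈ Λ^0 \ (H₁ ∪ H₂)` has some `n ∈ ℕ^k` with
`s(vΛ^{≤n}) ⊆ H₁ ∪ H₂`;
(3) there exists a nonempty saturated hereditary `H ⊆ Λ^0` with `Λ^0 ≻ H`. -/
theorem statement11 {k : ℕ} (Λ : KGraph k) (hlc : Λ.LocallyConvex)
    (hrf : Λ.RowFinite) :
    (∃ H₁ H₂ : Set Λ.Path,
      (∀ v ∈ H₁, Λ.IsVertex v) ∧ (∀ v ∈ H₂, Λ.IsVertex v) ∧
      H₁.Nonempty ∧ H₂.Nonempty ∧ Disjoint H₁ H₂ ∧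
      Λ.Hereditary H₁ ∧ Λ.Saturated H₁ ∧ Λ.Hereditary H₂ ∧ Λ.Saturated H₂ ∧
      ∀ v : Λ.Path, Λ.IsVertex v → v ∉ H₁ ∪ H₂ →
        ∃ n : Fin k → ℕ, ∀ lam ∈ Λ.boundedPaths n, Λ.r lam = v →
          Λ.s lam ∈ H₁ ∪ H₂) ↔
    (∃ H : Set Λ.Path, (∀ v ∈ H, Λ.IsVertex v) ∧ H.Nonempty ∧
      Λ.Hereditary H ∧ Λ.Saturated H ∧ Λ.Succ {v | Λ.IsVertex v} H) := by
  constructor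
  · rintro ⟨H₁, H₂, hv1, hv2, hne1, hne2, hdisj, hher1, hsat1, hher2, hsat2, hcov⟩
    have hH1Δ : H₁ ⊆ Λ.Delta {v | Λ.IsVertex v} H₂ := by
      intro u hu
      refine ⟨hv1 u hu, Set.eq_empty_iff_forall_notMem.mpr ?_⟩
      rintro w ⟨⟨μ, hrμ, hsμ⟩, hwH₂⟩
      have hsH1 : Λ.s μ ∈ H₁ := hher1 μ (by rw [hrμ]; exact hu)
      exact Set.disjoint_left.mp hdisj (hsμ ▸ hsH1) hwH₂
    refine ⟨H₂, hv2, hne2, hher2, hsat2, fun v hv => hv2 v hv, ?_, ?_⟩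
    · obtain ⟨u, hu⟩ := hne1
      exact ⟨u, hH1Δ hu⟩
    · rintro v ⟨⟨hv, hvH₂⟩, htree⟩
      have hv1' : v ∉ H₁ := fun h => htree.ne_empty (hH1Δ h).2
      obtain ⟨n, hn⟩ := hcov v hv (by
        intro h
        rcases h with h | h
        exacts [hv1' h, hvH₂ h])
      refine ⟨n, fun lam hbp hr => ?_⟩
      rcases hn lam hbp hr with h | h
      · exact Or.inr (hH1Δ h)
      · exact Or.inl h
  · rintro ⟨H, hvH, hneH, hherH, hsatH, hsub, hΔne, hΩ⟩
    refine ⟨Λ.Delta {v | Λ.IsVertex v} H, H, fun v hv => hv.1, hvH, hΔne, hneH,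
      Λ.delta_disjoint, Λ.delta_hereditary, Λ.delta_saturated hlc hherH,
      hherH, hsatH, ?_⟩
    intro v hv hvnot
    have hvΩ : v ∈ Λ.Omega {v | Λ.IsVertex v} H := by
      refine ⟨⟨hv, fun h => hvnot (Or.inr h)⟩, ?_⟩
      rcases Set.eq_empty_or_nonempty (Λ.tree v ∩ H) with he | hne
      · exact absurd (Or.inl ⟨hv, he⟩) hvnot
      · exact hne
    obtain ⟨n, hn⟩ := hΩ v hvΩ
    refine ⟨n, fun lam hbp hr => ?_⟩
    rcases hn lam hbp hr with h | h
    · exact Or.inr h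
    · exact Or.inl h
end
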